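/- arXiv:2501.12049 — 2 statements merged into one kernel-verified Lean document; each statement's English description precedes it below -/
import Mathlib

section
/- Let N ≥ 3 be an integer and L > 0. The following are equivalent: (i) there exist λ ∈ ℂ and functions φ₁, …, φ_N : ℝ → ℂ, not all identically zero on [0,L], each satisfying the KdV spectral ODE with parameter λ on [0,L], with the boundary conditions φ_j(0) = φ₁(0) for all j, Σ_{j=1}^N φ_j''(0) = 0, φ_j(L) = 0 and φ_j'(0) = 0 for all j, φ_j'(L) = 0 for j = 1,…,N−1, and φ_N''(L) = 0; (ii) L belongs to the critical set 𝒩. -/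
/-- A function `φ : ℝ → ℂ` satisfies the KdV spectral ODE with parameter `lam` on `[0, L]`:
it is three times continuously differentiable and `lam·φ + φ' + φ''' = 0` on `[0, L]`. -/
def KdVSpectralODE (lam : ℂ) (L : ℝ) (φ : ℝ → ℂ) : Prop :=
  ContDiff ℝ 3 φ ∧
    ∀ x ∈ Set.Icc (0 : ℝ) L, lam * φ x + deriv φ x + iteratedDeriv 3 φ x = 0

/-- The critical set 𝒩 of Rosier. -/
def criticalN : Set ℝ :=
  {L : ℝ | ∃ k l : ℕ, 0 < k ∧ 0 < l ∧
    L = (2 * Real.pi / Real.sqrt 3) * Real.sqrt ((k : ℝ) ^ 2 + (k : ℝ) * l + (l : ℝ) ^ 2)}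


open Complex Set

noncomputable section

private lemma hasDerivAt_cexp_mul (μ : ℂ) (x : ℝ) :
    HasDerivAt (fun y : ℝ => Complex.exp (μ * y)) (μ * Complex.exp (μ * x)) x := by
  have h1 : HasDerivAt (fun z : ℂ => Complex.exp (μ * z)) (μ * Complex.exp (μ * x)) (x : ℂ) := by
    exact ((hasDerivAt_id (x : ℂ)).const_mul μ).cexp.congr_deriv (by simp only [id_eq, mul_one]; ring)
  exact h1.comp_ofReal

private lemma hasDerivAt_xcexp_mul (μ : ℂ) (x : ℝ) :
    HasDerivAt (fun y : ℝ => (y : ℂ) * Complex.exp (μ * y))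
      (Complex.exp (μ * x) + μ * ((x : ℂ) * Complex.exp (μ * x))) x := by
  have h0 : HasDerivAt (fun y : ℝ => (y : ℂ)) 1 x := Complex.ofRealCLM.hasDerivAt
  have := h0.mul (hasDerivAt_cexp_mul μ x)
  exact this.congr_deriv (by ring)

private lemma contDiff_cexp_mul (μ : ℂ) (n : ℕ) :
    ContDiff ℝ n (fun y : ℝ => Complex.exp (μ * y)) := by
  have h1 : ContDiff ℝ n (fun y : ℝ => μ * (y : ℂ)) :=
    contDiff_const.mul Complex.ofRealCLM.contDiff
  exact Complex.contDiff_exp.comp h1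

private lemma contDiff_xcexp_mul (μ : ℂ) (n : ℕ) :
    ContDiff ℝ n (fun y : ℝ => (y : ℂ) * Complex.exp (μ * y)) :=
  Complex.ofRealCLM.contDiff.mul (contDiff_cexp_mul μ n)

end

noncomputable section

def sol3 (c₁ c₂ c₃ μ₁ μ₂ μ₃ : ℂ) : ℝ → ℂ := fun x =>
  c₁ * Complex.exp (μ₁ * x) + c₂ * Complex.exp (μ₂ * x) + c₃ * Complex.exp (μ₃ * x)

lemma sol3_hasDerivAt (c₁ c₂ c₃ μ₁ μ₂ μ₃ : ℂ) (x : ℝ) :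
    HasDerivAt (sol3 c₁ c₂ c₃ μ₁ μ₂ μ₃)
      (sol3 (c₁ * μ₁) (c₂ * μ₂) (c₃ * μ₃) μ₁ μ₂ μ₃ x) x := by
  have := (((hasDerivAt_cexp_mul μ₁ x).const_mul c₁).add
      ((hasDerivAt_cexp_mul μ₂ x).const_mul c₂)).add ((hasDerivAt_cexp_mul μ₃ x).const_mul c₃)
  exact this.congr_deriv (by unfold sol3; ring)

lemma sol3_deriv (c₁ c₂ c₃ μ₁ μ₂ μ₃ : ℂ) :
    deriv (sol3 c₁ c₂ c₃ μ₁ μ₂ μ₃) = sol3 (c₁ * μ₁) (c₂ * μ₂) (c₃ * μ₃) μ₁ μ₂ μ₃ :=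
  funext fun x => (sol3_hasDerivAt c₁ c₂ c₃ μ₁ μ₂ μ₃ x).deriv

lemma sol3_congr_coeff {c₁ c₂ c₃ d₁ d₂ d₃ : ℂ} (μ₁ μ₂ μ₃ : ℂ)
    (h1 : c₁ = d₁) (h2 : c₂ = d₂) (h3 : c₃ = d₃) :
    sol3 c₁ c₂ c₃ μ₁ μ₂ μ₃ = sol3 d₁ d₂ d₃ μ₁ μ₂ μ₃ := by rw [h1, h2, h3]

lemma sol3_iteratedDeriv_two (c₁ c₂ c₃ μ₁ μ₂ μ₃ : ℂ) :
    iteratedDeriv 2 (sol3 c₁ c₂ c₃ μ₁ μ₂ μ₃)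
      = sol3 (c₁ * μ₁ ^ 2) (c₂ * μ₂ ^ 2) (c₃ * μ₃ ^ 2) μ₁ μ₂ μ₃ := by
  rw [iteratedDeriv_succ, iteratedDeriv_one, sol3_deriv, sol3_deriv]
  exact sol3_congr_coeff _ _ _ (by ring) (by ring) (by ring)

lemma sol3_iteratedDeriv_three (c₁ c₂ c₃ μ₁ μ₂ μ₃ : ℂ) :
    iteratedDeriv 3 (sol3 c₁ c₂ c₃ μ₁ μ₂ μ₃)
      = sol3 (c₁ * μ₁ ^ 3) (c₂ * μ₂ ^ 3) (c₃ * μ₃ ^ 3) μ₁ μ₂ μ₃ := by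
  rw [iteratedDeriv_succ, sol3_iteratedDeriv_two, sol3_deriv]
  exact sol3_congr_coeff _ _ _ (by ring) (by ring) (by ring)

lemma sol3_contDiff (c₁ c₂ c₃ μ₁ μ₂ μ₃ : ℂ) (n : ℕ) :
    ContDiff ℝ n (sol3 c₁ c₂ c₃ μ₁ μ₂ μ₃) :=
  (((contDiff_const.mul (contDiff_cexp_mul μ₁ n)).add
    (contDiff_const.mul (contDiff_cexp_mul μ₂ n))).add (contDiff_const.mul (contDiff_cexp_mul μ₃ n)))

lemma sol3_zero_val (c₁ c₂ c₃ μ₁ μ₂ μ₃ : ℂ) : sol3 c₁ c₂ c₃ μ₁ μ₂ μ₃ 0 = c₁ + c₂ + c₃ := by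
  simp [sol3]

def sol3d (c₁ c₂ c₃ m : ℂ) : ℝ → ℂ := fun x =>
  c₁ * Complex.exp (m * x) + c₂ * ((x : ℂ) * Complex.exp (m * x))
    + c₃ * Complex.exp (-2 * m * x)

lemma sol3d_hasDerivAt (c₁ c₂ c₃ m : ℂ) (x : ℝ) :
    HasDerivAt (sol3d c₁ c₂ c₃ m)
      (sol3d (c₁ * m + c₂) (c₂ * m) (c₃ * (-2 * m)) m x) x := by
  have := (((hasDerivAt_cexp_mul m x).const_mul c₁).add
      ((hasDerivAt_xcexp_mul m x).const_mul c₂)).add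
      ((hasDerivAt_cexp_mul (-2 * m) x).const_mul c₃)
  exact this.congr_deriv (by unfold sol3d; ring)

lemma sol3d_deriv (c₁ c₂ c₃ m : ℂ) :
    deriv (sol3d c₁ c₂ c₃ m) = sol3d (c₁ * m + c₂) (c₂ * m) (c₃ * (-2 * m)) m :=
  funext fun x => (sol3d_hasDerivAt c₁ c₂ c₃ m x).deriv

lemma sol3d_congr_coeff {c₁ c₂ c₃ d₁ d₂ d₃ : ℂ} (m : ℂ)
    (h1 : c₁ = d₁) (h2 : c₂ = d₂) (h3 : c₃ = d₃) :
    sol3d c₁ c₂ c₃ m = sol3d d₁ d₂ d₃ m := by rw [h1, h2, h3]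

lemma sol3d_iteratedDeriv_two (c₁ c₂ c₃ m : ℂ) :
    iteratedDeriv 2 (sol3d c₁ c₂ c₃ m)
      = sol3d (c₁ * m ^ 2 + 2 * c₂ * m) (c₂ * m ^ 2) (c₃ * (4 * m ^ 2)) m := by
  rw [iteratedDeriv_succ, iteratedDeriv_one, sol3d_deriv, sol3d_deriv]
  exact sol3d_congr_coeff _ (by ring) (by ring) (by ring)

lemma sol3d_iteratedDeriv_three (c₁ c₂ c₃ m : ℂ) :
    iteratedDeriv 3 (sol3d c₁ c₂ c₃ m)
      = sol3d (c₁ * m ^ 3 + 3 * c₂ * m ^ 2) (c₂ * m ^ 3) (c₃ * (-8 * m ^ 3)) m := by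
  rw [iteratedDeriv_succ, sol3d_iteratedDeriv_two, sol3d_deriv]
  exact sol3d_congr_coeff _ (by ring) (by ring) (by ring)

lemma sol3d_contDiff (c₁ c₂ c₃ m : ℂ) (n : ℕ) : ContDiff ℝ n (sol3d c₁ c₂ c₃ m) :=
  ((contDiff_const.mul (contDiff_cexp_mul m n)).add
    (contDiff_const.mul (contDiff_xcexp_mul m n))).add (contDiff_const.mul (contDiff_cexp_mul (-2 * m) n))

lemma sol3d_zero_val (c₁ c₂ c₃ m : ℂ) : sol3d c₁ c₂ c₃ m 0 = c₁ + c₃ := by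
  simp [sol3d]

end

noncomputable section

def Amat (lam : ℂ) : (ℂ × ℂ × ℂ) →L[ℝ] (ℂ × ℂ × ℂ) :=
  letI p1 : (ℂ × ℂ × ℂ) →L[ℝ] ℂ := ContinuousLinearMap.fst ℝ ℂ (ℂ × ℂ)
  letI pr : (ℂ × ℂ × ℂ) →L[ℝ] (ℂ × ℂ) := ContinuousLinearMap.snd ℝ ℂ (ℂ × ℂ)
  letI p2 : (ℂ × ℂ × ℂ) →L[ℝ] ℂ := (ContinuousLinearMap.fst ℝ ℂ ℂ).comp pr
  letI p3 : (ℂ × ℂ × ℂ) →L[ℝ] ℂ := (ContinuousLinearMap.snd ℝ ℂ ℂ).comp pr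
  p2.prod (p3.prod ((-lam) • p1 - p2))

lemma Amat_apply (lam : ℂ) (p : ℂ × ℂ × ℂ) :
    Amat lam p = (p.2.1, p.2.2, -lam * p.1 - p.2.1) := by
  simp [Amat, ContinuousLinearMap.prod_apply, ContinuousLinearMap.smul_apply]

lemma kdv_eq_triple {lam : ℂ} {L : ℝ} {f g : ℝ → ℂ}
    (hf : KdVSpectralODE lam L f) (hg : KdVSpectralODE lam L g)
    (h0 : f 0 = g 0) (h1 : deriv f 0 = deriv g 0)
    (h2 : iteratedDeriv 2 f 0 = iteratedDeriv 2 g 0) :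
    ∀ x ∈ Set.Icc (0 : ℝ) L,
      f x = g x ∧ deriv f x = deriv g x ∧ iteratedDeriv 2 f x = iteratedDeriv 2 g x := by
  have key : ∀ (h : ℝ → ℂ), KdVSpectralODE lam L h →
      (ContinuousOn (fun t => (h t, deriv h t, iteratedDeriv 2 h t)) (Icc 0 L)) ∧
      ∀ t ∈ Ico (0 : ℝ) L,
        HasDerivWithinAt (fun t => (h t, deriv h t, iteratedDeriv 2 h t))
          (Amat lam ((h t, deriv h t, iteratedDeriv 2 h t))) (Ici t) t := by
    intro h hh
    have hcd := hh.1
    have hc0 : Continuous h := hcd.continuous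
    have hc1 : Continuous (deriv h) := hcd.continuous_deriv (by norm_num)
    have hc2 : Continuous (iteratedDeriv 2 h) :=
      hcd.continuous_iteratedDeriv 2 (by norm_num)
    refine ⟨((hc0.prodMk (hc1.prodMk hc2)).continuousOn), ?_⟩
    intro t ht
    have hd0 : HasDerivAt h (deriv h t) t :=
      ((hcd.differentiable (by norm_num)) t).hasDerivAt
    have hdiff1 : Differentiable ℝ (deriv h) := by
      have := hcd.differentiable_iteratedDeriv 1 (by norm_num)
      rwa [iteratedDeriv_one] at this
    have hd1 : HasDerivAt (deriv h) (iteratedDeriv 2 h t) t := by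
      have := (hdiff1 t).hasDerivAt
      rwa [show deriv (deriv h) t = iteratedDeriv 2 h t by
        rw [iteratedDeriv_succ, iteratedDeriv_one]] at this
    have hdiff2 : Differentiable ℝ (iteratedDeriv 2 h) :=
      hcd.differentiable_iteratedDeriv 2 (by norm_num)
    have hd2 : HasDerivAt (iteratedDeriv 2 h) (iteratedDeriv 3 h t) t := by
      have := (hdiff2 t).hasDerivAt
      have e3 : iteratedDeriv 3 h = deriv (iteratedDeriv 2 h) := iteratedDeriv_succ
      rwa [← e3] at this
    have hode := hh.2 t (Ico_subset_Icc_self ht)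
    have h3 : iteratedDeriv 3 h t = -lam * h t - deriv h t := by linear_combination hode
    have := hd0.prodMk (hd1.prodMk hd2)
    rw [h3] at this
    rw [Amat_apply]
    exact this.hasDerivWithinAt
  have hfk := key f hf
  have hgk := key g hg
  have main := ODE_solution_unique (v := fun _ p => Amat lam p)
    (fun _ => (Amat lam).lipschitz) hfk.1 hfk.2 hgk.1 hgk.2
    (by simp only [h0, h1, h2])
  intro x hx
  have := main hx
  simpa [Prod.ext_iff] using this

end

noncomputable section

lemma sol3_apply (c₁ c₂ c₃ μ₁ μ₂ μ₃ : ℂ) (x : ℝ) :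
    sol3 c₁ c₂ c₃ μ₁ μ₂ μ₃ x
      = c₁ * Complex.exp (μ₁ * x) + c₂ * Complex.exp (μ₂ * x) + c₃ * Complex.exp (μ₃ * x) := rfl

lemma sol3d_apply (c₁ c₂ c₃ m : ℂ) (x : ℝ) :
    sol3d c₁ c₂ c₃ m x
      = c₁ * Complex.exp (m * x) + c₂ * ((x : ℂ) * Complex.exp (m * x))
        + c₃ * Complex.exp (-2 * m * x) := rfl

lemma kdv_sol3 {lam : ℂ} (L : ℝ) {μ₁ μ₂ μ₃ : ℂ} (c₁ c₂ c₃ : ℂ)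
    (h1 : μ₁^3 + μ₁ + lam = 0) (h2 : μ₂^3 + μ₂ + lam = 0) (h3 : μ₃^3 + μ₃ + lam = 0) :
    KdVSpectralODE lam L (sol3 c₁ c₂ c₃ μ₁ μ₂ μ₃) := by
  refine ⟨sol3_contDiff _ _ _ _ _ _ 3, fun x hx => ?_⟩
  rw [sol3_deriv, sol3_iteratedDeriv_three, sol3_apply, sol3_apply, sol3_apply]
  linear_combination (c₁ * Complex.exp (μ₁ * x)) * h1 + (c₂ * Complex.exp (μ₂ * x)) * h2 +
    (c₃ * Complex.exp (μ₃ * x)) * h3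

lemma kdv_sol3d {lam : ℂ} (L : ℝ) {m : ℂ} (c₁ c₂ c₃ : ℂ)
    (h1 : m^3 + m + lam = 0) (h2 : (-2*m)^3 + (-2*m) + lam = 0) (hm2 : 3*m^2 + 1 = 0) :
    KdVSpectralODE lam L (sol3d c₁ c₂ c₃ m) := by
  refine ⟨sol3d_contDiff _ _ _ _ 3, fun x hx => ?_⟩
  rw [sol3d_deriv, sol3d_iteratedDeriv_three, sol3d_apply, sol3d_apply, sol3d_apply]
  linear_combination (c₁ * Complex.exp (m * x) + c₂ * ((x:ℂ) * Complex.exp (m * x))) * h1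
    + (Complex.exp (m * x) * c₂) * hm2 + (c₃ * Complex.exp (-2 * m * x)) * h2

lemma vand_solve {μ₁ μ₂ μ₃ : ℂ} (d12 : μ₁ ≠ μ₂) (d13 : μ₁ ≠ μ₃) (d23 : μ₂ ≠ μ₃)
    (a w b : ℂ) :
    ∃ c₁ c₂ c₃ : ℂ, c₁ + c₂ + c₃ = a ∧ c₁*μ₁ + c₂*μ₂ + c₃*μ₃ = w ∧
      c₁*μ₁^2 + c₂*μ₂^2 + c₃*μ₃^2 = b := by
  have h12 := sub_ne_zero.mpr d12
  have h13 := sub_ne_zero.mpr d13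
  have h23 := sub_ne_zero.mpr d23
  refine ⟨(b - w*(μ₂+μ₃) + a*μ₂*μ₃)/((μ₁-μ₂)*(μ₁-μ₃)),
          -((b - w*(μ₁+μ₃) + a*μ₁*μ₃)/((μ₁-μ₂)*(μ₂-μ₃))),
          (b - w*(μ₁+μ₂) + a*μ₁*μ₂)/((μ₁-μ₃)*(μ₂-μ₃)), ?_, ?_, ?_⟩ <;>
  · field_simp
    ring

lemma vand_solve_d {m : ℂ} (hm : m ≠ 0) (a w b : ℂ) :
    ∃ c₁ c₂ c₃ : ℂ, c₁ + c₃ = a ∧ c₁*m + c₂ + c₃*(-2*m) = w ∧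
      (c₁*m^2 + 2*c₂*m) + c₃*(4*m^2) = b := by
  refine ⟨a - (b - 2*m*w + m^2*a)/(9*m^2),
          w - m*(a - (b - 2*m*w + m^2*a)/(9*m^2)) + 2*m*((b - 2*m*w + m^2*a)/(9*m^2)),
          (b - 2*m*w + m^2*a)/(9*m^2), ?_, ?_, ?_⟩ <;>
  · field_simp
    try ring

lemma rep3 {lam : ℂ} {L : ℝ} {φ : ℝ → ℂ} (hφ : KdVSpectralODE lam L φ)
    {μ₁ μ₂ μ₃ : ℂ}
    (h1 : μ₁^3+μ₁+lam = 0) (h2 : μ₂^3+μ₂+lam = 0) (h3 : μ₃^3+μ₃+lam = 0)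
    (d12 : μ₁ ≠ μ₂) (d13 : μ₁ ≠ μ₃) (d23 : μ₂ ≠ μ₃) :
    ∃ c₁ c₂ c₃ : ℂ,
      c₁ + c₂ + c₃ = φ 0 ∧
      c₁*μ₁ + c₂*μ₂ + c₃*μ₃ = deriv φ 0 ∧
      c₁*μ₁^2 + c₂*μ₂^2 + c₃*μ₃^2 = iteratedDeriv 2 φ 0 ∧
      ∀ x ∈ Set.Icc (0:ℝ) L,
        φ x = sol3 c₁ c₂ c₃ μ₁ μ₂ μ₃ x ∧
        deriv φ x = sol3 (c₁*μ₁) (c₂*μ₂) (c₃*μ₃) μ₁ μ₂ μ₃ x ∧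
        iteratedDeriv 2 φ x = sol3 (c₁*μ₁^2) (c₂*μ₂^2) (c₃*μ₃^2) μ₁ μ₂ μ₃ x := by
  obtain ⟨c₁, c₂, c₃, e0, e1, e2⟩ := vand_solve d12 d13 d23 (φ 0) (deriv φ 0)
    (iteratedDeriv 2 φ 0)
  refine ⟨c₁, c₂, c₃, e0, e1, e2, ?_⟩
  have hg := kdv_sol3 (lam := lam) L c₁ c₂ c₃ h1 h2 h3
  have h0' : φ 0 = sol3 c₁ c₂ c₃ μ₁ μ₂ μ₃ 0 := by rw [sol3_zero_val]; exact e0.symm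
  have h1' : deriv φ 0 = deriv (sol3 c₁ c₂ c₃ μ₁ μ₂ μ₃) 0 := by
    rw [sol3_deriv, sol3_zero_val]; exact e1.symm
  have h2' : iteratedDeriv 2 φ 0 = iteratedDeriv 2 (sol3 c₁ c₂ c₃ μ₁ μ₂ μ₃) 0 := by
    rw [sol3_iteratedDeriv_two, sol3_zero_val]; exact e2.symm
  intro x hx
  obtain ⟨q0, q1, q2⟩ := kdv_eq_triple hφ hg h0' h1' h2' x hx
  exact ⟨q0, by rw [q1, sol3_deriv], by rw [q2, sol3_iteratedDeriv_two]⟩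

lemma rep3d {lam : ℂ} {L : ℝ} {φ : ℝ → ℂ} (hφ : KdVSpectralODE lam L φ)
    {m : ℂ}
    (h1 : m^3+m+lam = 0) (h2 : (-2*m)^3+(-2*m)+lam = 0) (hm2 : 3*m^2+1 = 0)
    (hm : m ≠ 0) :
    ∃ c₁ c₂ c₃ : ℂ,
      c₁ + c₃ = φ 0 ∧
      c₁*m + c₂ + c₃*(-2*m) = deriv φ 0 ∧
      (c₁*m^2 + 2*c₂*m) + c₃*(4*m^2) = iteratedDeriv 2 φ 0 ∧
      ∀ x ∈ Set.Icc (0:ℝ) L,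
        φ x = sol3d c₁ c₂ c₃ m x ∧
        deriv φ x = sol3d (c₁*m + c₂) (c₂*m) (c₃*(-2*m)) m x ∧
        iteratedDeriv 2 φ x = sol3d (c₁*m^2 + 2*c₂*m) (c₂*m^2) (c₃*(4*m^2)) m x := by
  obtain ⟨c₁, c₂, c₃, e0, e1, e2⟩ := vand_solve_d hm (φ 0) (deriv φ 0) (iteratedDeriv 2 φ 0)
  refine ⟨c₁, c₂, c₃, e0, e1, e2, ?_⟩
  have hg := kdv_sol3d (lam := lam) L c₁ c₂ c₃ h1 h2 hm2
  have h0' : φ 0 = sol3d c₁ c₂ c₃ m 0 := by rw [sol3d_zero_val]; exact e0.symm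
  have h1' : deriv φ 0 = deriv (sol3d c₁ c₂ c₃ m) 0 := by
    rw [sol3d_deriv, sol3d_zero_val]; exact e1.symm
  have h2' : iteratedDeriv 2 φ 0 = iteratedDeriv 2 (sol3d c₁ c₂ c₃ m) 0 := by
    rw [sol3d_iteratedDeriv_two, sol3d_zero_val]; exact e2.symm
  intro x hx
  obtain ⟨q0, q1, q2⟩ := kdv_eq_triple hφ hg h0' h1' h2' x hx
  exact ⟨q0, by rw [q1, sol3d_deriv], by rw [q2, sol3d_iteratedDeriv_two]⟩

end



lemma det2 {p q r s x y : ℂ} (h1 : p*x + q*y = 0) (h2 : r*x + s*y = 0)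
    (hxy : ¬(x = 0 ∧ y = 0)) : p*s - q*r = 0 := by
  by_cases hx : x = 0
  · have hy : y ≠ 0 := fun hy => hxy ⟨hx, hy⟩
    subst hx
    have h1' : q * y = 0 := by linear_combination h1
    have h2' : s * y = 0 := by linear_combination h2
    have hq : q = 0 := (mul_eq_zero.mp h1').resolve_right hy
    have hs : s = 0 := (mul_eq_zero.mp h2').resolve_right hy
    rw [hq, hs]; ring
  · have h : x*(p*s - q*r) = 0 := by linear_combination s*h1 - q*h2
    exact (mul_eq_zero.mp h).resolve_left hx

lemma eeq_of_G {μ₁ μ₂ μ₃ E₁ E₂ E₃ : ℂ} (d12 : μ₁ ≠ μ₂) (d13 : μ₁ ≠ μ₃) (d23 : μ₂ ≠ μ₃)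
    (hG1 : (μ₂-μ₃)*E₁ + (μ₃-μ₁)*E₂ + (μ₁-μ₂)*E₃ = 0)
    (hG2 : (μ₂-μ₃)*μ₁*E₁ + (μ₃-μ₁)*μ₂*E₂ + (μ₁-μ₂)*μ₃*E₃ = 0) :
    E₁ = E₂ ∧ E₂ = E₃ := by
  have k1 : (μ₂-μ₃)*(μ₁-μ₃)*(E₁-E₂) = 0 := by linear_combination hG2 - μ₃*hG1
  have k2 : (μ₃-μ₁)*(μ₂-μ₁)*(E₂-E₃) = 0 := by linear_combination hG2 - μ₁*hG1
  constructor
  · have := (mul_eq_zero.mp k1).resolve_left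
      (mul_ne_zero (sub_ne_zero.mpr d23) (sub_ne_zero.mpr d13))
    exact sub_eq_zero.mp this
  · have := (mul_eq_zero.mp k2).resolve_left
      (mul_ne_zero (sub_ne_zero.mpr (Ne.symm d13)) (sub_ne_zero.mpr (Ne.symm d12)))
    exact sub_eq_zero.mp this

lemma cross_aux {u₁ u₂ u₃ v₁ v₂ v₃ x₁ x₂ x₃ y₁ y₂ y₃ : ℂ}
    (hm : u₁*v₂ - u₂*v₁ ≠ 0)
    (hux : u₁*x₁ + u₂*x₂ + u₃*x₃ = 0) (hvx : v₁*x₁ + v₂*x₂ + v₃*x₃ = 0)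
    (huy : u₁*y₁ + u₂*y₂ + u₃*y₃ = 0) (hvy : v₁*y₁ + v₂*y₂ + v₃*y₃ = 0) :
    x₁*y₂ - x₂*y₁ = 0 ∧ x₂*y₃ - x₃*y₂ = 0 ∧ x₃*y₁ - x₁*y₃ = 0 := by
  set M := u₁*v₂ - u₂*v₁ with hM
  have hx1 : M*x₁ + (u₃*v₂ - u₂*v₃)*x₃ = 0 := by rw [hM]; linear_combination v₂*hux - u₂*hvx
  have hx2 : M*x₂ + (u₁*v₃ - u₃*v₁)*x₃ = 0 := by rw [hM]; linear_combination u₁*hvx - v₁*hux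
  have hy1 : M*y₁ + (u₃*v₂ - u₂*v₃)*y₃ = 0 := by rw [hM]; linear_combination v₂*huy - u₂*hvy
  have hy2 : M*y₂ + (u₁*v₃ - u₃*v₁)*y₃ = 0 := by rw [hM]; linear_combination u₁*hvy - v₁*huy
  refine ⟨?_, ?_, ?_⟩
  · have h : M^2*(x₁*y₂ - x₂*y₁) = 0 := by
      linear_combination (M*y₂)*hx1 - ((u₃*v₂ - u₂*v₃)*x₃)*hy2 - (M*y₁)*hx2
        + ((u₁*v₃ - u₃*v₁)*x₃)*hy1
    exact (mul_eq_zero.mp h).resolve_left (pow_ne_zero 2 hm)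
  · have h : M*(x₂*y₃ - x₃*y₂) = 0 := by linear_combination y₃*hx2 - x₃*hy2
    exact (mul_eq_zero.mp h).resolve_left hm
  · have h : M*(x₃*y₁ - x₁*y₃) = 0 := by linear_combination x₃*hy1 - y₃*hx1
    exact (mul_eq_zero.mp h).resolve_left hm

lemma cross_all {u₁ u₂ u₃ v₁ v₂ v₃ x₁ x₂ x₃ y₁ y₂ y₃ : ℂ}
    (hm : ¬(u₁*v₂ - u₂*v₁ = 0 ∧ u₂*v₃ - u₃*v₂ = 0 ∧ u₃*v₁ - u₁*v₃ = 0))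
    (hux : u₁*x₁ + u₂*x₂ + u₃*x₃ = 0) (hvx : v₁*x₁ + v₂*x₂ + v₃*x₃ = 0)
    (huy : u₁*y₁ + u₂*y₂ + u₃*y₃ = 0) (hvy : v₁*y₁ + v₂*y₂ + v₃*y₃ = 0) :
    x₁*y₂ - x₂*y₁ = 0 ∧ x₂*y₃ - x₃*y₂ = 0 ∧ x₃*y₁ - x₁*y₃ = 0 := by
  by_cases h12 : u₁*v₂ - u₂*v₁ = 0
  · by_cases h23 : u₂*v₃ - u₃*v₂ = 0
    · have h31 : u₃*v₁ - u₁*v₃ ≠ 0 := fun h => hm ⟨h12, h23, h⟩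
      have := cross_aux (u₁ := u₃) (u₂ := u₁) (u₃ := u₂) (v₁ := v₃) (v₂ := v₁) (v₃ := v₂)
        (x₁ := x₃) (x₂ := x₁) (x₃ := x₂) (y₁ := y₃) (y₂ := y₁) (y₃ := y₂)
        h31 (by linear_combination hux) (by linear_combination hvx)
        (by linear_combination huy) (by linear_combination hvy)
      exact ⟨this.2.1, this.2.2, this.1⟩
    · have := cross_aux (u₁ := u₂) (u₂ := u₃) (u₃ := u₁) (v₁ := v₂) (v₂ := v₃) (v₃ := v₁)
        (x₁ := x₂) (x₂ := x₃) (x₃ := x₁) (y₁ := y₂) (y₂ := y₃) (y₃ := y₁)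
        h23 (by linear_combination hux) (by linear_combination hvx)
        (by linear_combination huy) (by linear_combination hvy)
      exact ⟨this.2.2, this.1, this.2.1⟩
  · exact cross_aux h12 hux hvx huy hvy

lemma sum_shift {N : ℕ} (jN : Fin N) (q : Fin N → ℂ) (Q R : ℂ)
    (hq : ∀ j : Fin N, j ≠ jN → q j = Q) (hqN : q jN = Q - R) (hS : ∑ j, q j = 0) :
    (N:ℂ) * Q - R = 0 := by
  have key : ∀ j : Fin N, q j = Q + (if j = jN then -R else 0) := by
    intro j
    by_cases h : j = jN
    · subst h; rw [hqN]; rw [if_pos rfl]; ring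
    · rw [hq j h]; simp [h]
  rw [Finset.sum_congr rfl (fun j _ => key j), Finset.sum_add_distrib,
    Finset.sum_const, Finset.sum_ite_eq' Finset.univ jN (fun _ => -R)] at hS
  simp only [Finset.mem_univ, if_true, Finset.card_univ, Fintype.card_fin,
    nsmul_eq_mul] at hS
  linear_combination hS

lemma algebra_distinct {N : ℕ} (hN : 3 ≤ N)
    {μ₁ μ₂ μ₃ E₁ E₂ E₃ a : ℂ} {c1 c2 c3 : Fin N → ℂ}
    (jN : Fin N) (hjN : (jN : ℕ) = N - 1)
    (d12 : μ₁ ≠ μ₂) (d13 : μ₁ ≠ μ₃) (d23 : μ₂ ≠ μ₃)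
    (hE1 : E₁ ≠ 0) (hE2 : E₂ ≠ 0) (hE3 : E₃ ≠ 0)
    (h0 : ∀ j, c1 j + c2 j + c3 j = a)
    (h1 : ∀ j, c1 j * μ₁ + c2 j * μ₂ + c3 j * μ₃ = 0)
    (hB0 : ∀ j, c1 j * E₁ + c2 j * E₂ + c3 j * E₃ = 0)
    (hB1 : ∀ j : Fin N, (j : ℕ) < N - 1 →
      c1 j * μ₁ * E₁ + c2 j * μ₂ * E₂ + c3 j * μ₃ * E₃ = 0)
    (hB2 : c1 jN * μ₁^2 * E₁ + c2 jN * μ₂^2 * E₂ + c3 jN * μ₃^2 * E₃ = 0)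
    (hS : ∑ j, (c1 j * μ₁^2 + c2 j * μ₂^2 + c3 j * μ₃^2) = 0)
    (hnt : ∃ j, ¬(c1 j = 0 ∧ c2 j = 0 ∧ c3 j = 0)) :
    E₁ = E₂ ∧ E₂ = E₃ := by
  have s12 := sub_ne_zero.mpr d12
  have s13 := sub_ne_zero.mpr d13
  have s23 := sub_ne_zero.mpr d23
  have s21 := sub_ne_zero.mpr d12.symm
  have s31 := sub_ne_zero.mpr d13.symm
  have s32 := sub_ne_zero.mpr d23.symm
  have hj0N : 0 < N - 1 := by omega
  set j0 : Fin N := ⟨0, by omega⟩ with hj0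
  have hj0lt : ((j0 : Fin N) : ℕ) < N - 1 := hj0N
  by_cases hA : ∀ j : Fin N, (j : ℕ) < N - 1 →
      (c1 j = c1 j0 ∧ c2 j = c2 j0 ∧ c3 j = c3 j0)
  · -- all "interior" coefficient vectors are equal
    set C1 := c1 j0; set C2 := c2 j0; set C3 := c3 j0
    set D1 := C1 - c1 jN with hD1def
    set D2 := C2 - c2 jN with hD2def
    set D3 := C3 - c3 jN with hD3def
    have hD0 : D1 + D2 + D3 = 0 := by
      simp only [hD1def, hD2def, hD3def]; linear_combination h0 j0 - h0 jN
    have hDmu : D1*μ₁ + D2*μ₂ + D3*μ₃ = 0 := by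
      simp only [hD1def, hD2def, hD3def]; linear_combination h1 j0 - h1 jN
    have hDE : D1*E₁ + D2*E₂ + D3*E₃ = 0 := by
      simp only [hD1def, hD2def, hD3def]; linear_combination hB0 j0 - hB0 jN
    set s : ℂ := D1/(μ₂-μ₃) with hsdef
    have hs1 : D1 = s*(μ₂-μ₃) := by rw [hsdef]; field_simp
    have e23 : (μ₁-μ₃)*D1 + (μ₂-μ₃)*D2 = 0 := by linear_combination hDmu - μ₃*hD0
    have hs2 : D2 = s*(μ₃-μ₁) := by
      rw [hsdef]; rw [div_mul_eq_mul_div, eq_div_iff s23]; linear_combination e23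
    have hs3 : D3 = s*(μ₁-μ₂) := by linear_combination hD0 - hs1 - hs2
    -- the weighted sum identity
    set Q : ℂ := C1*μ₁^2 + C2*μ₂^2 + C3*μ₃^2 with hQdef
    set W : ℂ := (μ₂-μ₃)*μ₁^2 + (μ₃-μ₁)*μ₂^2 + (μ₁-μ₂)*μ₃^2 with hWdef
    have hWne : W ≠ 0 := by
      have : W = -((μ₁-μ₂)*((μ₂-μ₃)*(μ₃-μ₁))) := by rw [hWdef]; ring
      rw [this]
      exact neg_ne_zero.mpr (mul_ne_zero s12 (mul_ne_zero s23 s31))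
    have hsum' : (N:ℂ) * Q - s*W = 0 := by
      apply sum_shift jN _ Q (s*W) _ _ hS
      · intro j hj
        have hjlt : (j : ℕ) < N - 1 := by
          have := j.isLt
          have : (j : ℕ) ≠ N - 1 := fun h => hj (Fin.ext (by rw [h, hjN]))
          omega
        obtain ⟨e1, e2, e3⟩ := hA j hjlt
        rw [e1, e2, e3]
      · have r1 : c1 jN = C1 - s*(μ₂-μ₃) := by rw [← hs1]; rw [hD1def]; ring
        have r2 : c2 jN = C2 - s*(μ₃-μ₁) := by rw [← hs2]; rw [hD2def]; ring
        have r3 : c3 jN = C3 - s*(μ₁-μ₂) := by rw [← hs3]; rw [hD3def]; ring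
        rw [r1, r2, r3, hQdef, hWdef]; ring
    by_cases hs0 : s = 0
    · -- all coefficient vectors equal; 3x3 invertible system forces triviality
      have r1 : c1 jN = C1 := by rw [hD1def] at hs1; rw [hs0] at hs1; linear_combination -hs1
      have r2 : c2 jN = C2 := by rw [hD2def] at hs2; rw [hs0] at hs2; linear_combination -hs2
      have r3 : c3 jN = C3 := by rw [hD3def] at hs3; rw [hs0] at hs3; linear_combination -hs3
      have eC0 := hB0 j0
      have eC1 := hB1 j0 hj0lt
      have eC2 : C1 * μ₁^2 * E₁ + C2 * μ₂^2 * E₂ + C3 * μ₃^2 * E₃ = 0 := by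
        rw [← r1, ← r2, ← r3]; exact hB2
      have k1 : (μ₁-μ₂)*(μ₁-μ₃)*E₁*C1 = 0 := by
        linear_combination eC2 - (μ₂+μ₃)*eC1 + μ₂*μ₃*eC0
      have k2 : (μ₂-μ₁)*(μ₂-μ₃)*E₂*C2 = 0 := by
        linear_combination eC2 - (μ₁+μ₃)*eC1 + μ₁*μ₃*eC0
      have k3 : (μ₃-μ₁)*(μ₃-μ₂)*E₃*C3 = 0 := by
        linear_combination eC2 - (μ₁+μ₂)*eC1 + μ₁*μ₂*eC0
      have hC1 : C1 = 0 := (mul_eq_zero.mp k1).resolve_left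
        (mul_ne_zero (mul_ne_zero s12 s13) hE1)
      have hC2 : C2 = 0 := (mul_eq_zero.mp k2).resolve_left
        (mul_ne_zero (mul_ne_zero s21 s23) hE2)
      have hC3 : C3 = 0 := (mul_eq_zero.mp k3).resolve_left
        (mul_ne_zero (mul_ne_zero s31 s32) hE3)
      exfalso
      obtain ⟨j, hj⟩ := hnt
      apply hj
      by_cases hjN' : j = jN
      · subst hjN'; exact ⟨by rw [r1, hC1], by rw [r2, hC2], by rw [r3, hC3]⟩
      · have hjlt : (j : ℕ) < N - 1 := by
          have := j.isLt
          have : (j : ℕ) ≠ N - 1 := fun h => hjN' (Fin.ext (by rw [h, hjN]))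
          omega
        obtain ⟨e1, e2, e3⟩ := hA j hjlt
        exact ⟨by rw [e1, hC1], by rw [e2, hC2], by rw [e3, hC3]⟩
    · -- s ≠ 0 : the "G-function" vanishes at L
      have hG1 : (μ₂-μ₃)*E₁ + (μ₃-μ₁)*E₂ + (μ₁-μ₂)*E₃ = 0 := by
        have h' : s*((μ₂-μ₃)*E₁ + (μ₃-μ₁)*E₂ + (μ₁-μ₂)*E₃) = 0 := by
          linear_combination hDE - E₁*hs1 - E₂*hs2 - E₃*hs3
        exact (mul_eq_zero.mp h').resolve_left hs0
      by_cases hpar : (μ₂-μ₃)*C2 - (μ₃-μ₁)*C1 = 0 ∧ (μ₃-μ₁)*C3 - (μ₁-μ₂)*C2 = 0 ∧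
          (μ₁-μ₂)*C1 - (μ₂-μ₃)*C3 = 0
      · -- C parallel to g
        obtain ⟨hp1, hp2, hp3⟩ := hpar
        set r : ℂ := C1/(μ₂-μ₃) with hrdef
        have hr1 : C1 = r*(μ₂-μ₃) := by rw [hrdef]; field_simp
        have hr2 : C2 = r*(μ₃-μ₁) := by
          rw [hrdef, div_mul_eq_mul_div, eq_div_iff s23]; linear_combination hp1
        have hr3 : C3 = r*(μ₁-μ₂) := by
          rw [hrdef, div_mul_eq_mul_div, eq_div_iff s23]; linear_combination -hp3
        have hQr : Q = r*W := by rw [hQdef, hWdef, hr1, hr2, hr3]; ring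
        have hNr : ((N:ℂ)*r - s)*W = 0 := by
          rw [hQr] at hsum'; linear_combination hsum'
        have hsr : s = (N:ℂ)*r := by
          have := (mul_eq_zero.mp hNr).resolve_right hWne
          linear_combination -this
        have hrne : r ≠ 0 := by
          intro h; apply hs0; rw [hsr, h, mul_zero]
        have hG2 : (μ₂-μ₃)*μ₁*E₁ + (μ₃-μ₁)*μ₂*E₂ + (μ₁-μ₂)*μ₃*E₃ = 0 := by
          have h' : r*((μ₂-μ₃)*μ₁*E₁ + (μ₃-μ₁)*μ₂*E₂ + (μ₁-μ₂)*μ₃*E₃) = 0 := by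
            linear_combination hB1 j0 hj0lt - μ₁*E₁*hr1 - μ₂*E₂*hr2 - μ₃*E₃*hr3
          exact (mul_eq_zero.mp h').resolve_left hrne
        exact eeq_of_G d12 d13 d23 hG1 hG2
      · -- C not parallel to g : E proportional to μ, contradiction
        have hcross := cross_all (u₁ := μ₂-μ₃) (u₂ := μ₃-μ₁) (u₃ := μ₁-μ₂)
          (v₁ := C1) (v₂ := C2) (v₃ := C3)
          (x₁ := E₁) (x₂ := E₂) (x₃ := E₃) (y₁ := μ₁) (y₂ := μ₂) (y₃ := μ₃)
          hpar hG1 (by linear_combination hB0 j0) (by ring) (by linear_combination h1 j0)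
        obtain ⟨cr12, cr23, cr31⟩ := hcross
        have hQ0 : E₁*Q = 0 := by
          rw [hQdef]
          linear_combination μ₁*(hB1 j0 hj0lt) + C2*μ₂*cr12 - C3*μ₃*cr31
        have hQz : Q = 0 := (mul_eq_zero.mp hQ0).resolve_left hE1
        exfalso
        apply hs0
        rw [hQz, mul_zero, zero_sub, neg_eq_zero] at hsum'
        exact (mul_eq_zero.mp hsum').resolve_right hWne
  · -- two distinct "interior" coefficient vectors: Rosier's classical situation
    push_neg at hA
    obtain ⟨j, hjlt, hne⟩ := hA
    set d1 := c1 j - c1 j0 with hd1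
    set d2 := c2 j - c2 j0 with hd2
    set d3 := c3 j - c3 j0 with hd3
    have hd0 : d1 + d2 + d3 = 0 := by
      simp only [hd1, hd2, hd3]; linear_combination h0 j - h0 j0
    have hdmu : d1*μ₁ + d2*μ₂ + d3*μ₃ = 0 := by
      simp only [hd1, hd2, hd3]; linear_combination h1 j - h1 j0
    have hdE : d1*E₁ + d2*E₂ + d3*E₃ = 0 := by
      simp only [hd1, hd2, hd3]; linear_combination hB0 j - hB0 j0
    have hdE1 : d1*μ₁*E₁ + d2*μ₂*E₂ + d3*μ₃*E₃ = 0 := by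
      simp only [hd1, hd2, hd3]; linear_combination hB1 j hjlt - hB1 j0 hj0lt
    have hd12 : ¬(d1 = 0 ∧ d2 = 0) := by
      rintro ⟨z1, z2⟩
      have z3 : d3 = 0 := by rw [z1, z2] at hd0; linear_combination hd0
      have e1 : c1 j = c1 j0 := by rw [hd1] at z1; linear_combination z1
      have e2 : c2 j = c2 j0 := by rw [hd2] at z2; linear_combination z2
      have e3 : c3 j = c3 j0 := by rw [hd3] at z3; linear_combination z3
      exact (hne e1 e2) e3
    have E1eq : (μ₁-μ₃)*d1 + (μ₂-μ₃)*d2 = 0 := by linear_combination hdmu - μ₃*hd0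
    have E2eq : (E₁-E₃)*d1 + (E₂-E₃)*d2 = 0 := by linear_combination hdE - E₃*hd0
    have E3eq : (μ₁*E₁-μ₃*E₃)*d1 + (μ₂*E₂-μ₃*E₃)*d2 = 0 := by
      linear_combination hdE1 - μ₃*E₃*hd0
    have m1 := det2 E1eq E2eq hd12
    have m2 := det2 E1eq E3eq hd12
    exact eeq_of_G d12 d13 d23 (by linear_combination -m1) (by linear_combination -m2)

lemma algebra_double {N : ℕ} (hN : 3 ≤ N) {m u v Lc a : ℂ} {c1 c2 c3 : Fin N → ℂ}
    (jN : Fin N) (hjN : (jN : ℕ) = N - 1)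
    (hm2 : 3*m^2 + 1 = 0) (hmL1 : m*Lc ≠ 1) (hLc : Lc ≠ 0)
    (hu : u ≠ 0) (hv : v ≠ 0)
    (h0 : ∀ j, c1 j + c3 j = a)
    (h1 : ∀ j, c1 j * m + c2 j + c3 j * (-2*m) = 0)
    (hB0 : ∀ j, c1 j * u + c2 j * (Lc*u) + c3 j * v = 0)
    (hB1 : ∀ j : Fin N, (j:ℕ) < N-1 →
      (c1 j * m + c2 j) * u + (c2 j * m) * (Lc*u) + (c3 j * (-2*m)) * v = 0)
    (hB2 : (c1 jN * m^2 + 2*c2 jN*m) * u + (c2 jN * m^2) * (Lc*u) + (c3 jN * (4*m^2)) * v = 0)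
    (hS : ∑ j, (c1 j * m^2 + 2*c2 j*m + c3 j*(4*m^2)) = 0)
    (hnt : ∃ j, ¬(c1 j = 0 ∧ c2 j = 0 ∧ c3 j = 0)) : False := by
  have hm0 : m ≠ 0 := by
    intro h; rw [h] at hm2; norm_num at hm2
  have hj0N : 0 < N - 1 := by omega
  set j0 : Fin N := ⟨0, by omega⟩ with hj0
  have hj0lt : ((j0 : Fin N) : ℕ) < N - 1 := hj0N
  by_cases hA : ∀ j : Fin N, (j : ℕ) < N - 1 →
      (c1 j = c1 j0 ∧ c2 j = c2 j0 ∧ c3 j = c3 j0)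
  · set C1 := c1 j0; set C2 := c2 j0; set C3 := c3 j0
    set D1 := C1 - c1 jN with hD1def
    set D2 := C2 - c2 jN with hD2def
    set D3 := C3 - c3 jN with hD3def
    have hD0 : D1 + D3 = 0 := by
      simp only [hD1def, hD3def]; linear_combination h0 j0 - h0 jN
    have hDm : D1*m + D2 + D3*(-2*m) = 0 := by
      simp only [hD1def, hD2def, hD3def]; linear_combination h1 j0 - h1 jN
    have hDB0 : D1*u + D2*(Lc*u) + D3*v = 0 := by
      simp only [hD1def, hD2def, hD3def]; linear_combination hB0 j0 - hB0 jN
    have hD3' : D3 = -D1 := by linear_combination hD0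
    have hD2' : D2 = -3*m*D1 := by linear_combination hDm + 2*m*hD0
    have hsum' : (N:ℂ) * (C1*m^2 + 2*C2*m + C3*(4*m^2)) - (-9*m^2*D1) = 0 := by
      apply sum_shift jN _ _ _ _ _ hS
      · intro j hj
        have hjlt : (j : ℕ) < N - 1 := by
          have := j.isLt
          have : (j : ℕ) ≠ N - 1 := fun h => hj (Fin.ext (by rw [h, hjN]))
          omega
        obtain ⟨e1, e2, e3⟩ := hA j hjlt
        rw [e1, e2, e3]
      · have r1 : c1 jN = C1 - D1 := by rw [hD1def]; ring
        have r2 : c2 jN = C2 - D2 := by rw [hD2def]; ring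
        have r3 : c3 jN = C3 - D3 := by rw [hD3def]; ring
        rw [r1, r2, r3, hD2', hD3']; ring
    by_cases hD : D1 = 0
    · -- all coefficient vectors equal
      have r1 : c1 jN = C1 := by rw [hD1def] at hD; linear_combination -hD
      have r3 : c3 jN = C3 := by
        have : D3 = 0 := by rw [hD3', hD, neg_zero]
        rw [hD3def] at this; linear_combination -this
      have r2 : c2 jN = C2 := by
        have : D2 = 0 := by rw [hD2', hD, mul_zero]
        rw [hD2def] at this; linear_combination -this
      have eC0 : C1 * u + C2 * (Lc*u) + C3 * v = 0 := hB0 j0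
      have eC1 : (C1 * m + C2) * u + (C2 * m) * (Lc*u) + (C3 * (-2*m)) * v = 0 := hB1 j0 hj0lt
      have eC2 : (C1 * m^2 + 2*C2*m) * u + (C2 * m^2) * (Lc*u) + (C3 * (4*m^2)) * v = 0 := by
        rw [← r1, ← r2, ← r3]; exact hB2
      have kA : C2*u + C3*(-3*m)*v = 0 := by linear_combination eC1 - m*eC0
      have kB : C2*m*u + C3*(6*m^2)*v = 0 := by linear_combination eC2 - m*eC1
      have k3 : (9:ℂ)*m^2*v*C3 = 0 := by linear_combination kB - m*kA
      have hC3 : C3 = 0 := by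
        have h9 : (9:ℂ)*m^2*v ≠ 0 :=
          mul_ne_zero (mul_ne_zero (by norm_num) (pow_ne_zero 2 hm0)) hv
        exact (mul_eq_zero.mp k3).resolve_left h9
      have hC2 : C2 = 0 := by
        rw [hC3] at kA
        have : C2*u = 0 := by linear_combination kA
        exact (mul_eq_zero.mp this).resolve_right hu
      have hC1 : C1 = 0 := by
        rw [hC2, hC3] at eC0
        have : C1*u = 0 := by linear_combination eC0
        exact (mul_eq_zero.mp this).resolve_right hu
      obtain ⟨j, hj⟩ := hnt
      apply hj
      by_cases hjN' : j = jN
      · subst hjN'; exact ⟨by rw [r1, hC1], by rw [r2, hC2], by rw [r3, hC3]⟩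
      · have hjlt : (j : ℕ) < N - 1 := by
          have := j.isLt
          have : (j : ℕ) ≠ N - 1 := fun h => hjN' (Fin.ext (by rw [h, hjN]))
          omega
        obtain ⟨e1, e2, e3⟩ := hA j hjlt
        exact ⟨by rw [e1, hC1], by rw [e2, hC2], by rw [e3, hC3]⟩
    · -- D1 ≠ 0 : v = (1-3mL)u, then C = 0, then contradiction
      have hveq : v = (1 - 3*m*Lc)*u := by
        have h' : D1*(v - (1 - 3*m*Lc)*u) = 0 := by
          linear_combination -hDB0 + Lc*u*hD2' + v*hD3'
        have := (mul_eq_zero.mp h').resolve_left hD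
        linear_combination this
      have i1 : C1 * m + C2 + C3 * (-2*m) = 0 := h1 j0
      have i2 : C1 * u + C2 * (Lc*u) + C3 * v = 0 := hB0 j0
      have i3 : (C1 * m + C2) * u + (C2 * m) * (Lc*u) + (C3 * (-2*m)) * v = 0 := hB1 j0 hj0lt
      have kk : m*Lc*u*(C2 + 6*m*C3) = 0 := by
        rw [hveq] at i2 i3
        linear_combination i3 - u*i1
      have hmlu : m*Lc*u ≠ 0 := mul_ne_zero (mul_ne_zero hm0 hLc) hu
      have hC2' : C2 = -6*m*C3 := by
        have := (mul_eq_zero.mp kk).resolve_left hmlu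
        linear_combination this
      have hC1' : C1 = 8*C3 := by
        have h' : m*(C1 - 8*C3) = 0 := by linear_combination i1 - hC2'
        have := (mul_eq_zero.mp h').resolve_left hm0
        linear_combination this
      have hC3 : C3 = 0 := by
        have h' : (9:ℂ)*u*(1 - m*Lc)*C3 = 0 := by
          rw [hveq] at i2
          linear_combination i2 - Lc*u*hC2' - u*hC1'
        have h9 : (9:ℂ)*u*(1 - m*Lc) ≠ 0 := by
          refine mul_ne_zero (mul_ne_zero (by norm_num) hu) ?_
          intro h
          exact hmL1 (by linear_combination -h)
        exact (mul_eq_zero.mp h').resolve_left h9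
      have hC2 : C2 = 0 := by rw [hC2', hC3, mul_zero]
      have hC1 : C1 = 0 := by rw [hC1', hC3, mul_zero]
      apply hD
      have : (N:ℂ) ≠ 0 := Nat.cast_ne_zero.mpr (by omega)
      have h9 : (9:ℂ)*m^2*D1 = 0 := by
        rw [hC1, hC2, hC3] at hsum'
        linear_combination hsum'
      have h9' : (9:ℂ)*m^2 ≠ 0 := mul_ne_zero (by norm_num) (pow_ne_zero 2 hm0)
      exact (mul_eq_zero.mp h9).resolve_left h9'
  · -- two distinct interior coefficient vectors: contradiction
    push_neg at hA
    obtain ⟨j, hjlt, hne⟩ := hA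
    set d1 := c1 j - c1 j0 with hd1
    set d2 := c2 j - c2 j0 with hd2
    set d3 := c3 j - c3 j0 with hd3
    have hd0 : d1 + d3 = 0 := by
      simp only [hd1, hd3]; linear_combination h0 j - h0 j0
    have hdm : d1*m + d2 + d3*(-2*m) = 0 := by
      simp only [hd1, hd2, hd3]; linear_combination h1 j - h1 j0
    have hdB0 : d1*u + d2*(Lc*u) + d3*v = 0 := by
      simp only [hd1, hd2, hd3]; linear_combination hB0 j - hB0 j0
    have hdB1 : (d1*m + d2)*u + (d2*m)*(Lc*u) + (d3*(-2*m))*v = 0 := by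
      simp only [hd1, hd2, hd3]; linear_combination hB1 j hjlt - hB1 j0 hj0lt
    have hd3' : d3 = -d1 := by linear_combination hd0
    have hd2' : d2 = -3*m*d1 := by linear_combination hdm + 2*m*hd0
    have hd1ne : d1 ≠ 0 := by
      intro h
      have z3 : d3 = 0 := by rw [hd3', h, neg_zero]
      have z2 : d2 = 0 := by rw [hd2', h, mul_zero]
      have e1 : c1 j = c1 j0 := by rw [hd1] at h; linear_combination h
      have e2 : c2 j = c2 j0 := by rw [hd2] at z2; linear_combination z2
      have e3 : c3 j = c3 j0 := by rw [hd3] at z3; linear_combination z3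
      exact (hne e1 e2) e3
    have hveq : v = (1 - 3*m*Lc)*u := by
      have h' : d1*(v - (1 - 3*m*Lc)*u) = 0 := by
        linear_combination -hdB0 + Lc*u*hd2' + v*hd3'
      have := (mul_eq_zero.mp h').resolve_left hd1ne
      linear_combination this
    have h9 : (9:ℂ)*(m^2*Lc*u*d1) = 0 := by
      rw [hveq, hd2', hd3'] at hdB1
      linear_combination -hdB1
    have h9' : (9:ℂ)*(m^2*Lc*u*d1) ≠ 0 := by
      refine mul_ne_zero (by norm_num) ?_
      exact mul_ne_zero (mul_ne_zero (mul_ne_zero (pow_ne_zero 2 hm0) hLc) hu) hd1ne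
    exact h9' h9

lemma root_eq {μ₁ μ₂ μ₃ lam : ℂ} (hs : μ₁+μ₂+μ₃ = 0) (he2 : μ₁*μ₂+μ₁*μ₃+μ₂*μ₃ = 1)
    (he3 : μ₁*μ₂*μ₃ = -lam) : μ₁^3 + μ₁ + lam = 0 := by
  linear_combination he3 - μ₁*he2 + μ₁^2*hs

lemma cubic_factor (lam : ℂ) :
    ∃ μ₁ μ₂ μ₃ : ℂ, μ₁+μ₂+μ₃ = 0 ∧ μ₁*μ₂+μ₁*μ₃+μ₂*μ₃ = 1 ∧ μ₁*μ₂*μ₃ = -lam := by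
  have hdeg1 : (Polynomial.X^3 + (Polynomial.X + Polynomial.C lam) : Polynomial ℂ).degree = 3 := by
    rw [Polynomial.degree_add_eq_left_of_degree_lt]
    · exact Polynomial.degree_X_pow 3
    · rw [Polynomial.degree_X_pow]
      exact lt_of_le_of_lt (Polynomial.degree_X_add_C lam).le (by norm_num)
  obtain ⟨μ₁, hμ₁⟩ := Complex.exists_root (f := Polynomial.X^3 + (Polynomial.X + Polynomial.C lam))
    (by rw [hdeg1]; norm_num)
  have hc : μ₁^3 + μ₁ + lam = 0 := by
    have := hμ₁
    simp only [Polynomial.IsRoot, Polynomial.eval_add, Polynomial.eval_pow, Polynomial.eval_X,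
      Polynomial.eval_C] at this
    linear_combination this
  have hdeg2 : (Polynomial.X^2 + (Polynomial.C μ₁ * Polynomial.X + Polynomial.C (1+μ₁^2))
      : Polynomial ℂ).degree = 2 := by
    rw [Polynomial.degree_add_eq_left_of_degree_lt]
    · exact Polynomial.degree_X_pow 2
    · rw [Polynomial.degree_X_pow]
      exact lt_of_le_of_lt (Polynomial.degree_linear_le) (by norm_num)
  obtain ⟨μ₂, hμ₂⟩ := Complex.exists_root
    (f := Polynomial.X^2 + (Polynomial.C μ₁ * Polynomial.X + Polynomial.C (1+μ₁^2)))
    (by rw [hdeg2]; norm_num)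
  have hq : μ₂^2 + μ₁*μ₂ + (1+μ₁^2) = 0 := by
    have := hμ₂
    simp only [Polynomial.IsRoot, Polynomial.eval_add, Polynomial.eval_pow, Polynomial.eval_mul,
      Polynomial.eval_X, Polynomial.eval_C] at this
    linear_combination this
  refine ⟨μ₁, μ₂, -μ₁-μ₂, by ring, by linear_combination -hq, by linear_combination -μ₁*hq + hc⟩

lemma int_form_pos {k l : ℤ} (hk : k ≠ 0) (hl : l ≠ 0) (hkl : k + l ≠ 0) :
    ∃ p q : ℕ, 0 < p ∧ 0 < q ∧ (p:ℤ)^2 + p*q + q^2 = k^2 + k*l + l^2 := by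
  have key : ∀ a b : ℤ, 0 < a → 0 < b → a^2 + a*b + b^2 = k^2+k*l+l^2 →
      ∃ p q : ℕ, 0 < p ∧ 0 < q ∧ (p:ℤ)^2 + p*q + q^2 = k^2 + k*l + l^2 := by
    intro a b ha hb hab
    refine ⟨a.toNat, b.toNat, by omega, by omega, ?_⟩
    have ha' : (a.toNat : ℤ) = a := Int.toNat_of_nonneg ha.le
    have hb' : (b.toNat : ℤ) = b := Int.toNat_of_nonneg hb.le
    rw [ha', hb']; exact hab
  rcases lt_or_gt_of_ne hk with hk' | hk' <;> rcases lt_or_gt_of_ne hl with hl' | hl' <;>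
    rcases lt_or_gt_of_ne hkl with hkl' | hkl'
  · exact key (-k) (-l) (by omega) (by omega) (by ring)
  · exact key (-k) (-l) (by omega) (by omega) (by ring)
  · exact key (-k-l) l (by omega) (by omega) (by ring)
  · exact key (k+l) (-k) (by omega) (by omega) (by ring)
  · exact key (-k-l) k (by omega) (by omega) (by ring)
  · exact key (k+l) (-l) (by omega) (by omega) (by ring)
  · omega
  · exact key k l (by omega) (by omega) (by ring)

lemma re_eq_zero_of_sq {m : ℂ} (hm2 : 3*m^2 + 1 = 0) : m.re = 0 := by
  have h1 := congrArg Complex.re hm2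
  have h2 := congrArg Complex.im hm2
  simp only [Complex.add_re, Complex.add_im, Complex.mul_re, Complex.mul_im, Complex.re_ofNat,
    Complex.im_ofNat, Complex.one_re, Complex.one_im, Complex.zero_re, Complex.zero_im,
    pow_two] at h1 h2
  by_contra hre
  have hprod : m.re * m.im = 0 := by linarith
  have him : m.im = 0 := (mul_eq_zero.mp hprod).resolve_left hre
  rw [him] at h1
  nlinarith [sq_nonneg m.re]

lemma mL_ne_one {m : ℂ} {L : ℝ} (hm2 : 3*m^2 + 1 = 0) : m*(L:ℂ) ≠ 1 := by
  intro h
  have hre := congrArg Complex.re h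
  simp only [Complex.mul_re, Complex.ofReal_re, Complex.ofReal_im, Complex.one_re,
    re_eq_zero_of_sq hm2, zero_mul, mul_zero, sub_zero] at hre
  norm_num at hre

lemma m_ne_zero_of_sq {m : ℂ} (hm2 : 3*m^2 + 1 = 0) : m ≠ 0 := by
  intro h; rw [h] at hm2; norm_num at hm2


lemma crit_of_ints {L : ℝ} (hL : 0 < L) {μ₁ μ₂ μ₃ : ℂ}
    (hs : μ₁+μ₂+μ₃ = 0) (he2 : μ₁*μ₂+μ₁*μ₃+μ₂*μ₃ = 1)
    (d12 : μ₁ ≠ μ₂) (d13 : μ₁ ≠ μ₃) (d23 : μ₂ ≠ μ₃)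
    {k l : ℤ} (hk : (μ₁-μ₂)*(L:ℂ) = k*(2*(Real.pi:ℂ)*Complex.I))
    (hl : (μ₂-μ₃)*(L:ℂ) = l*(2*(Real.pi:ℂ)*Complex.I)) :
    L ∈ criticalN := by
  have hLne : (L:ℂ) ≠ 0 := Complex.ofReal_ne_zero.mpr hL.ne'
  have hkne : k ≠ 0 := by
    intro h
    rw [h] at hk
    simp only [Int.cast_zero, zero_mul] at hk
    rcases mul_eq_zero.mp hk with h' | h'
    · exact d12 (sub_eq_zero.mp h')
    · exact hLne h'
  have hlne : l ≠ 0 := by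
    intro h
    rw [h] at hl
    simp only [Int.cast_zero, zero_mul] at hl
    rcases mul_eq_zero.mp hl with h' | h'
    · exact d23 (sub_eq_zero.mp h')
    · exact hLne h'
  have hklne : k + l ≠ 0 := by
    intro h
    have h13 : (μ₁-μ₃)*(L:ℂ) = ((k:ℂ)+l)*(2*(Real.pi:ℂ)*Complex.I) := by
      linear_combination hk + hl
    have : ((k:ℂ)+l) = 0 := by exact_mod_cast congrArg Int.cast h
    rw [this, zero_mul] at h13
    rcases mul_eq_zero.mp h13 with h' | h'
    · exact d13 (sub_eq_zero.mp h')
    · exact hLne h'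
  have e1 : 3*(μ₁*(L:ℂ)) = (2*(k:ℂ)+l)*(2*(Real.pi:ℂ)*Complex.I) := by
    linear_combination 2*hk + hl + (L:ℂ)*hs
  have e2 : 3*(μ₂*(L:ℂ)) = ((l:ℂ)-k)*(2*(Real.pi:ℂ)*Complex.I) := by
    linear_combination -hk + hl + (L:ℂ)*hs
  have e3 : 3*(μ₃*(L:ℂ)) = (-(k:ℂ)-2*l)*(2*(Real.pi:ℂ)*Complex.I) := by
    linear_combination -hk - 2*hl + (L:ℂ)*hs
  have hI : (Complex.I)^2 = -1 := Complex.I_sq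
  have keyC : 9*(L:ℂ)^2 = 12*(Real.pi:ℂ)^2*((k:ℂ)^2 + (k:ℂ)*l + (l:ℂ)^2) := by
    linear_combination (-9*(L:ℂ)^2)*he2 + (3*μ₂*(L:ℂ)+3*μ₃*(L:ℂ))*e1
      + ((2*(k:ℂ)+l)*(2*(Real.pi:ℂ)*Complex.I) + 3*μ₃*(L:ℂ))*e2
      + (((k:ℂ)+2*l)*(2*(Real.pi:ℂ)*Complex.I))*e3
      + (-(12*(Real.pi:ℂ)^2*((k:ℂ)^2 + (k:ℂ)*l + (l:ℂ)^2)))*hI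
  have keyR : 9*L^2 = 12*Real.pi^2*((k:ℝ)^2 + (k:ℝ)*l + (l:ℝ)^2) := by
    exact_mod_cast keyC
  obtain ⟨p, q, hp, hq, hpq⟩ := int_form_pos hkne hlne hklne
  have hpqR : ((p:ℝ)^2 + (p:ℝ)*q + (q:ℝ)^2) = ((k:ℝ)^2 + (k:ℝ)*l + (l:ℝ)^2) := by
    exact_mod_cast congrArg (Int.cast : ℤ → ℝ) hpq
  set F : ℝ := (p:ℝ)^2 + (p:ℝ)*q + (q:ℝ)^2 with hFdef
  have hF0 : 0 ≤ F := by positivity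
  have hLsq : L^2 = (2*Real.pi/Real.sqrt 3 * Real.sqrt F)^2 := by
    have hs3 : (Real.sqrt 3)^2 = 3 := Real.sq_sqrt (by norm_num)
    have hsF : (Real.sqrt F)^2 = F := Real.sq_sqrt hF0
    have h3ne : Real.sqrt 3 ≠ 0 := by positivity
    field_simp
    nlinarith [keyR, hpqR, hsF]
  have hR0 : 0 ≤ 2*Real.pi/Real.sqrt 3 * Real.sqrt F := by positivity
  refine ⟨p, q, hp, hq, ?_⟩
  calc L = Real.sqrt (L^2) := (Real.sqrt_sq hL.le).symm
    _ = Real.sqrt ((2*Real.pi/Real.sqrt 3 * Real.sqrt F)^2) := by rw [hLsq]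
    _ = 2*Real.pi/Real.sqrt 3 * Real.sqrt F := Real.sqrt_sq hR0

-- converse assembly (to be appended after previous parts)
noncomputable section

lemma double_case {N : ℕ} (hN : 3 ≤ N) {L : ℝ} (hL : 0 < L) {lam a : ℂ} {φ : Fin N → ℝ → ℂ}
    (jN : Fin N) (hjN : (jN : ℕ) = N - 1)
    (hode : ∀ j, KdVSpectralODE lam L (φ j))
    (hsame : ∀ j, φ j 0 = a)
    (hsum : (∑ j, iteratedDeriv 2 (φ j) 0) = 0)
    (hbL : ∀ j, φ j L = 0)
    (hd0 : ∀ j, deriv (φ j) 0 = 0)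
    (hdL : ∀ j : Fin N, (j : ℕ) < N - 1 → deriv (φ j) L = 0)
    (h2L : iteratedDeriv 2 (φ jN) L = 0)
    (hnt : ∃ j, ∃ x ∈ Set.Icc (0 : ℝ) L, φ j x ≠ 0)
    {m : ℂ} (hm2 : 3*m^2 + 1 = 0) (rm : m^3 + m + lam = 0)
    (rm' : (-2*m)^3 + (-2*m) + lam = 0) : False := by
  have hm0 : m ≠ 0 := m_ne_zero_of_sq hm2
  have hLmem : L ∈ Set.Icc (0:ℝ) L := ⟨hL.le, le_refl L⟩
  have H : ∀ j, ∃ c₁ c₂ c₃ : ℂ,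
      c₁ + c₃ = φ j 0 ∧
      c₁*m + c₂ + c₃*(-2*m) = deriv (φ j) 0 ∧
      (c₁*m^2 + 2*c₂*m) + c₃*(4*m^2) = iteratedDeriv 2 (φ j) 0 ∧
      ∀ x ∈ Set.Icc (0:ℝ) L,
        φ j x = sol3d c₁ c₂ c₃ m x ∧
        deriv (φ j) x = sol3d (c₁*m + c₂) (c₂*m) (c₃*(-2*m)) m x ∧
        iteratedDeriv 2 (φ j) x = sol3d (c₁*m^2 + 2*c₂*m) (c₂*m^2) (c₃*(4*m^2)) m x :=
    fun j => rep3d (hode j) rm rm' hm2 hm0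
  choose c1 c2 c3 hA hB hC hrep using H
  set u : ℂ := Complex.exp (m * (L:ℂ)) with hu_def
  set v : ℂ := Complex.exp (-2 * m * (L:ℂ)) with hv_def
  have hu : u ≠ 0 := Complex.exp_ne_zero _
  have hv : v ≠ 0 := Complex.exp_ne_zero _
  refine algebra_double hN jN hjN hm2 (mL_ne_one hm2) (Complex.ofReal_ne_zero.mpr hL.ne')
    hu hv (a := a) (c1 := c1) (c2 := c2) (c3 := c3) ?_ ?_ ?_ ?_ ?_ ?_ ?_
  · intro j; rw [hA j, hsame j]
  · intro j; rw [hB j, hd0 j]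
  · intro j
    have h := (hrep j L hLmem).1
    rw [hbL j] at h
    rw [hu_def, hv_def]
    exact h.symm
  · intro j hj
    have h := (hrep j L hLmem).2.1
    rw [hdL j hj] at h
    rw [hu_def, hv_def]
    exact h.symm
  · have h := (hrep jN L hLmem).2.2
    rw [h2L] at h
    rw [hu_def, hv_def]
    exact h.symm
  · rw [← hsum]
    exact Finset.sum_congr rfl (fun j _ => hC j)
  · obtain ⟨j, x, hx, hne⟩ := hnt
    refine ⟨j, fun hzero => hne ?_⟩
    obtain ⟨z1, z2, z3⟩ := hzero
    have h := (hrep j x hx).1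
    rw [z1, z2, z3] at h
    rw [h, sol3d_apply]
    ring

lemma distinct_case {N : ℕ} (hN : 3 ≤ N) {L : ℝ} (hL : 0 < L) {lam a : ℂ} {φ : Fin N → ℝ → ℂ}
    (jN : Fin N) (hjN : (jN : ℕ) = N - 1)
    (hode : ∀ j, KdVSpectralODE lam L (φ j))
    (hsame : ∀ j, φ j 0 = a)
    (hsum : (∑ j, iteratedDeriv 2 (φ j) 0) = 0)
    (hbL : ∀ j, φ j L = 0)
    (hd0 : ∀ j, deriv (φ j) 0 = 0)
    (hdL : ∀ j : Fin N, (j : ℕ) < N - 1 → deriv (φ j) L = 0)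
    (h2L : iteratedDeriv 2 (φ jN) L = 0)
    (hnt : ∃ j, ∃ x ∈ Set.Icc (0 : ℝ) L, φ j x ≠ 0)
    {μ₁ μ₂ μ₃ : ℂ} (hs : μ₁+μ₂+μ₃ = 0) (he2 : μ₁*μ₂+μ₁*μ₃+μ₂*μ₃ = 1)
    (r1 : μ₁^3 + μ₁ + lam = 0) (r2 : μ₂^3 + μ₂ + lam = 0) (r3 : μ₃^3 + μ₃ + lam = 0)
    (d12 : μ₁ ≠ μ₂) (d13 : μ₁ ≠ μ₃) (d23 : μ₂ ≠ μ₃) : L ∈ criticalN := by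
  have hLmem : L ∈ Set.Icc (0:ℝ) L := ⟨hL.le, le_refl L⟩
  have H : ∀ j, ∃ c₁ c₂ c₃ : ℂ,
      c₁ + c₂ + c₃ = φ j 0 ∧
      c₁*μ₁ + c₂*μ₂ + c₃*μ₃ = deriv (φ j) 0 ∧
      c₁*μ₁^2 + c₂*μ₂^2 + c₃*μ₃^2 = iteratedDeriv 2 (φ j) 0 ∧
      ∀ x ∈ Set.Icc (0:ℝ) L,
        φ j x = sol3 c₁ c₂ c₃ μ₁ μ₂ μ₃ x ∧
        deriv (φ j) x = sol3 (c₁*μ₁) (c₂*μ₂) (c₃*μ₃) μ₁ μ₂ μ₃ x ∧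
        iteratedDeriv 2 (φ j) x = sol3 (c₁*μ₁^2) (c₂*μ₂^2) (c₃*μ₃^2) μ₁ μ₂ μ₃ x :=
    fun j => rep3 (hode j) r1 r2 r3 d12 d13 d23
  choose c1 c2 c3 hA hB hC hrep using H
  set E₁ : ℂ := Complex.exp (μ₁ * (L:ℂ)) with hE1_def
  set E₂ : ℂ := Complex.exp (μ₂ * (L:ℂ)) with hE2_def
  set E₃ : ℂ := Complex.exp (μ₃ * (L:ℂ)) with hE3_def
  have hEeq : E₁ = E₂ ∧ E₂ = E₃ := by
    refine algebra_distinct hN jN hjN d12 d13 d23 (Complex.exp_ne_zero _)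
      (Complex.exp_ne_zero _) (Complex.exp_ne_zero _) (a := a)
      (c1 := c1) (c2 := c2) (c3 := c3) ?_ ?_ ?_ ?_ ?_ ?_ ?_
    · intro j; rw [hA j, hsame j]
    · intro j; rw [hB j, hd0 j]
    · intro j
      have h := (hrep j L hLmem).1
      rw [hbL j] at h
      rw [hE1_def, hE2_def, hE3_def]
      exact h.symm
    · intro j hj
      have h := (hrep j L hLmem).2.1
      rw [hdL j hj] at h
      rw [hE1_def, hE2_def, hE3_def]
      exact h.symm
    · have h := (hrep jN L hLmem).2.2
      rw [h2L] at h
      rw [hE1_def, hE2_def, hE3_def]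
      exact h.symm
    · rw [← hsum]
      exact Finset.sum_congr rfl (fun j _ => hC j)
    · obtain ⟨j, x, hx, hne⟩ := hnt
      refine ⟨j, fun hzero => hne ?_⟩
      obtain ⟨z1, z2, z3⟩ := hzero
      have h := (hrep j x hx).1
      rw [z1, z2, z3] at h
      rw [h, sol3_apply]
      ring
  obtain ⟨hE12, hE23⟩ := hEeq
  rw [hE1_def, hE2_def] at hE12
  rw [hE2_def, hE3_def] at hE23
  obtain ⟨k, hk⟩ := Complex.exp_eq_exp_iff_exists_int.mp hE12
  obtain ⟨l, hl⟩ := Complex.exp_eq_exp_iff_exists_int.mp hE23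
  exact crit_of_ints hL hs he2 d12 d13 d23 (k := k) (l := l)
    (by linear_combination hk) (by linear_combination hl)

lemma converse_main {N : ℕ} (hN : 3 ≤ N) {L : ℝ} (hL : 0 < L) {lam a : ℂ} {φ : Fin N → ℝ → ℂ}
    (jN : Fin N) (hjN : (jN : ℕ) = N - 1)
    (hode : ∀ j, KdVSpectralODE lam L (φ j))
    (hsame : ∀ j, φ j 0 = a)
    (hsum : (∑ j, iteratedDeriv 2 (φ j) 0) = 0)
    (hbL : ∀ j, φ j L = 0)
    (hd0 : ∀ j, deriv (φ j) 0 = 0)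
    (hdL : ∀ j : Fin N, (j : ℕ) < N - 1 → deriv (φ j) L = 0)
    (h2L : iteratedDeriv 2 (φ jN) L = 0)
    (hnt : ∃ j, ∃ x ∈ Set.Icc (0 : ℝ) L, φ j x ≠ 0) : L ∈ criticalN := by
  obtain ⟨μ₁, μ₂, μ₃, hs, he2, he3⟩ := cubic_factor lam
  have r1 : μ₁^3 + μ₁ + lam = 0 := root_eq hs he2 he3
  have r2 : μ₂^3 + μ₂ + lam = 0 :=
    root_eq (μ₂ := μ₁) (μ₃ := μ₃) (by linear_combination hs) (by linear_combination he2)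
      (by linear_combination he3)
  have r3 : μ₃^3 + μ₃ + lam = 0 :=
    root_eq (μ₂ := μ₁) (μ₃ := μ₂) (by linear_combination hs) (by linear_combination he2)
      (by linear_combination he3)
  by_cases d12 : μ₁ = μ₂
  · rw [← d12] at hs he2
    have h3 : μ₃ = -2*μ₁ := by linear_combination hs
    rw [h3] at he2
    have hm2 : 3*μ₁^2 + 1 = 0 := by linear_combination -he2
    have rm' : (-2*μ₁)^3 + (-2*μ₁) + lam = 0 := by rw [← h3]; exact r3
    exact absurd (double_case hN hL jN hjN hode hsame hsum hbL hd0 hdL h2L hnt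
      hm2 r1 rm') (fun h => h)
  · by_cases d13 : μ₁ = μ₃
    · rw [← d13] at hs he2
      have h2 : μ₂ = -2*μ₁ := by linear_combination hs
      rw [h2] at he2
      have hm2 : 3*μ₁^2 + 1 = 0 := by linear_combination -he2
      have rm' : (-2*μ₁)^3 + (-2*μ₁) + lam = 0 := by rw [← h2]; exact r2
      exact absurd (double_case hN hL jN hjN hode hsame hsum hbL hd0 hdL h2L hnt
        hm2 r1 rm') (fun h => h)
    · by_cases d23 : μ₂ = μ₃
      · rw [← d23] at hs he2
        have h1 : μ₁ = -2*μ₂ := by linear_combination hs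
        rw [h1] at he2
        have hm2 : 3*μ₂^2 + 1 = 0 := by linear_combination -he2
        have rm' : (-2*μ₂)^3 + (-2*μ₂) + lam = 0 := by rw [← h1]; exact r1
        exact absurd (double_case hN hL jN hjN hode hsame hsum hbL hd0 hdL h2L hnt
          hm2 r2 rm') (fun h => h)
      · exact distinct_case hN hL jN hjN hode hsame hsum hbL hd0 hdL h2L hnt hs he2
          r1 r2 r3 d12 d13 d23

end

noncomputable section

lemma mu_ne_of_eta {a b : ℝ} (h : a ≠ b) : Complex.I*(a:ℂ) ≠ Complex.I*(b:ℂ) := by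
  intro hh
  apply h
  have := mul_left_cancel₀ Complex.I_ne_zero hh
  exact_mod_cast this

lemma sol3_nontrivial {μ₁ μ₂ μ₃ g₁ g₂ g₃ : ℂ} {L : ℝ} (hL : 0 < L)
    (hne : g₁*μ₁^2 + g₂*μ₂^2 + g₃*μ₃^2 ≠ 0) :
    ∃ x ∈ Set.Icc (0:ℝ) L, sol3 g₁ g₂ g₃ μ₁ μ₂ μ₃ x ≠ 0 := by
  by_contra hcon
  push_neg at hcon
  have h1 : ∀ x ∈ Set.Ioo (0:ℝ) L, sol3 (g₁*μ₁) (g₂*μ₂) (g₃*μ₃) μ₁ μ₂ μ₃ x = 0 := by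
    intro x hx
    have hev : sol3 g₁ g₂ g₃ μ₁ μ₂ μ₃ =ᶠ[nhds x] (fun _ => (0:ℂ)) :=
      Filter.eventuallyEq_of_mem (isOpen_Ioo.mem_nhds hx)
        (fun y hy => hcon y (Set.Ioo_subset_Icc_self hy))
    calc sol3 (g₁*μ₁) (g₂*μ₂) (g₃*μ₃) μ₁ μ₂ μ₃ x
        = deriv (sol3 g₁ g₂ g₃ μ₁ μ₂ μ₃) x := by rw [sol3_deriv]
      _ = deriv (fun _ => (0:ℂ)) x := hev.deriv_eq
      _ = 0 := by simp
  have h2 : ∀ x ∈ Set.Ioo (0:ℝ) L, sol3 (g₁*μ₁^2) (g₂*μ₂^2) (g₃*μ₃^2) μ₁ μ₂ μ₃ x = 0 := by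
    intro x hx
    have hev : sol3 (g₁*μ₁) (g₂*μ₂) (g₃*μ₃) μ₁ μ₂ μ₃ =ᶠ[nhds x] (fun _ => (0:ℂ)) :=
      Filter.eventuallyEq_of_mem (isOpen_Ioo.mem_nhds hx) (fun y hy => h1 y hy)
    calc sol3 (g₁*μ₁^2) (g₂*μ₂^2) (g₃*μ₃^2) μ₁ μ₂ μ₃ x
        = sol3 (g₁*μ₁*μ₁) (g₂*μ₂*μ₂) (g₃*μ₃*μ₃) μ₁ μ₂ μ₃ x := by
          exact congrFun (sol3_congr_coeff _ _ _ (by ring) (by ring) (by ring)) x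
      _ = deriv (sol3 (g₁*μ₁) (g₂*μ₂) (g₃*μ₃) μ₁ μ₂ μ₃) x := by rw [sol3_deriv]
      _ = deriv (fun _ => (0:ℂ)) x := hev.deriv_eq
      _ = 0 := by simp
  have hcont : Continuous (sol3 (g₁*μ₁^2) (g₂*μ₂^2) (g₃*μ₃^2) μ₁ μ₂ μ₃) :=
    (sol3_contDiff _ _ _ _ _ _ 0).continuous
  have hmem : (0:ℝ) ∈ closure (Set.Ioo 0 L) := by
    rw [closure_Ioo hL.ne]
    exact ⟨le_refl 0, hL.le⟩
  have hnb : (nhdsWithin (0:ℝ) (Set.Ioo 0 L)).NeBot :=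
    mem_closure_iff_nhdsWithin_neBot.mp hmem
  have t1 : Filter.Tendsto (sol3 (g₁*μ₁^2) (g₂*μ₂^2) (g₃*μ₃^2) μ₁ μ₂ μ₃)
      (nhdsWithin 0 (Set.Ioo 0 L)) (nhds (sol3 (g₁*μ₁^2) (g₂*μ₂^2) (g₃*μ₃^2) μ₁ μ₂ μ₃ 0)) :=
    hcont.continuousAt.continuousWithinAt
  have hev0 : (fun _ : ℝ => (0:ℂ)) =ᶠ[nhdsWithin (0:ℝ) (Set.Ioo 0 L)]
      (sol3 (g₁*μ₁^2) (g₂*μ₂^2) (g₃*μ₃^2) μ₁ μ₂ μ₃) :=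
    eventually_nhdsWithin_of_forall (fun x hx => (h2 x hx).symm)
  have t2 : Filter.Tendsto (sol3 (g₁*μ₁^2) (g₂*μ₂^2) (g₃*μ₃^2) μ₁ μ₂ μ₃)
      (nhdsWithin 0 (Set.Ioo 0 L)) (nhds 0) :=
    Filter.Tendsto.congr' hev0 tendsto_const_nhds
  have hzero := tendsto_nhds_unique t1 t2
  rw [sol3_zero_val] at hzero
  exact hne hzero

lemma sum_e_zero {N : ℕ} (hN : 3 ≤ N) :
    ∑ j : Fin N, (if (j:ℕ) = 0 then (1:ℂ) else if (j:ℕ) = 1 then -1 else 0) = 0 := by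
  have key : ∀ j : Fin N, (if (j:ℕ) = 0 then (1:ℂ) else if (j:ℕ) = 1 then -1 else 0)
      = (if j = (⟨0, by omega⟩ : Fin N) then (1:ℂ) else 0)
        + (if j = (⟨1, by omega⟩ : Fin N) then (-1:ℂ) else 0) := by
    intro j
    by_cases hj0 : j = (⟨0, by omega⟩ : Fin N)
    · have hv0 : (j:ℕ) = 0 := by rw [hj0]
      have hne1 : j ≠ (⟨1, by omega⟩ : Fin N) := by
        intro hh
        rw [hh] at hv0
        exact absurd hv0 (by norm_num)
      rw [if_pos hv0, if_pos hj0, if_neg hne1]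
      ring
    · have h0 : (j:ℕ) ≠ 0 := fun h => hj0 (Fin.ext h)
      rw [if_neg h0, if_neg hj0]
      by_cases hj1 : j = (⟨1, by omega⟩ : Fin N)
      · have hv1 : (j:ℕ) = 1 := by rw [hj1]
        rw [if_pos hv1, if_pos hj1]
        ring
      · have h1 : (j:ℕ) ≠ 1 := fun h => hj1 (Fin.ext h)
        rw [if_neg h1, if_neg hj1]
        ring
  rw [Finset.sum_congr rfl (fun j _ => key j), Finset.sum_add_distrib,
    Finset.sum_ite_eq' Finset.univ (⟨0, by omega⟩ : Fin N) (fun _ => (1:ℂ)),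
    Finset.sum_ite_eq' Finset.univ (⟨1, by omega⟩ : Fin N) (fun _ => (-1:ℂ))]
  simp

lemma forward_direction {N : ℕ} (hN : 3 ≤ N) {L : ℝ} (hL : 0 < L) (hcrit : L ∈ criticalN) :
    ∃ lam : ℂ, ∃ φ : Fin N → ℝ → ℂ,
      (∀ j, KdVSpectralODE lam L (φ j)) ∧
      (∀ j, φ j 0 = φ ⟨0, lt_of_lt_of_le (by norm_num) hN⟩ 0) ∧
      (∑ j, iteratedDeriv 2 (φ j) 0) = 0 ∧
      (∀ j, φ j L = 0) ∧
      (∀ j, deriv (φ j) 0 = 0) ∧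
      (∀ j : Fin N, (j : ℕ) < N - 1 → deriv (φ j) L = 0) ∧
      iteratedDeriv 2 (φ ⟨N - 1, Nat.sub_lt (lt_of_lt_of_le (by norm_num) hN) one_pos⟩) L = 0 ∧
      (∃ j, ∃ x ∈ Set.Icc (0 : ℝ) L, φ j x ≠ 0) := by
  obtain ⟨k, l, hk, hl, hLeq⟩ := hcrit
  have hπ := Real.pi_pos
  have hk' : (1:ℝ) ≤ (k:ℝ) := by exact_mod_cast hk
  have hl' : (1:ℝ) ≤ (l:ℝ) := by exact_mod_cast hl
  have hF0 : (0:ℝ) < (k:ℝ)^2 + (k:ℝ)*l + (l:ℝ)^2 := by nlinarith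
  have hLsq : 3*L^2 = 4*Real.pi^2*((k:ℝ)^2 + (k:ℝ)*l + (l:ℝ)^2) := by
    have h1 : Real.sqrt ((k:ℝ)^2 + (k:ℝ)*l + (l:ℝ)^2) ^ 2 = (k:ℝ)^2 + (k:ℝ)*l + (l:ℝ)^2 :=
      Real.sq_sqrt hF0.le
    have h2 : Real.sqrt 3 ^ 2 = 3 := Real.sq_sqrt (by norm_num)
    have h3 : Real.sqrt 3 ≠ 0 := by positivity
    rw [hLeq]
    calc 3*(2*Real.pi/Real.sqrt 3 * Real.sqrt ((k:ℝ)^2 + (k:ℝ)*l + (l:ℝ)^2))^2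
        = 3*((2*Real.pi)^2/(Real.sqrt 3)^2
            *(Real.sqrt ((k:ℝ)^2 + (k:ℝ)*l + (l:ℝ)^2))^2) := by ring
      _ = 4*Real.pi^2*((k:ℝ)^2 + (k:ℝ)*l + (l:ℝ)^2) := by rw [h1, h2]; ring
  set θ : ℝ := 2*Real.pi/(3*L) with hθ
  have hθpos : 0 < θ := by rw [hθ]; positivity
  set η₁ : ℝ := θ*(2*(k:ℝ)+l) with hη₁
  set η₂ : ℝ := θ*((l:ℝ)-k) with hη₂
  set η₃ : ℝ := -θ*((k:ℝ)+2*l) with hη₃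
  set μ₁ : ℂ := Complex.I * (η₁:ℂ) with hμ₁
  set μ₂ : ℂ := Complex.I * (η₂:ℂ) with hμ₂
  set μ₃ : ℂ := Complex.I * (η₃:ℂ) with hμ₃
  set lam : ℂ := Complex.I * ((η₁*η₂*η₃ : ℝ):ℂ) with hlam
  have hI : Complex.I^2 = -1 := Complex.I_sq
  have hLne : L ≠ 0 := hL.ne'
  -- symmetric function identities
  have hsum_eta : η₁ + η₂ + η₃ = 0 := by rw [hη₁, hη₂, hη₃]; ring
  have hpair_eta : η₁*η₂ + η₁*η₃ + η₂*η₃ = -1 := by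
    rw [hη₁, hη₂, hη₃, hθ]
    field_simp
    linear_combination 3*hLsq
  have hsC : μ₁ + μ₂ + μ₃ = 0 := by
    have hc := congrArg (fun t : ℝ => (t:ℂ)) hsum_eta
    push_cast at hc
    rw [hμ₁, hμ₂, hμ₃]
    linear_combination Complex.I*hc
  have he2C : μ₁*μ₂ + μ₁*μ₃ + μ₂*μ₃ = 1 := by
    have hc := congrArg (fun t : ℝ => (t:ℂ)) hpair_eta
    push_cast at hc
    rw [hμ₁, hμ₂, hμ₃]
    linear_combination ((η₁:ℂ)*η₂ + (η₁:ℂ)*η₃ + (η₂:ℂ)*η₃)*hI - hc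
  have he3C : μ₁*μ₂*μ₃ = -lam := by
    rw [hμ₁, hμ₂, hμ₃, hlam]
    push_cast
    linear_combination (Complex.I*((η₁:ℂ)*η₂*η₃))*hI
  have r1 : μ₁^3 + μ₁ + lam = 0 := root_eq hsC he2C he3C
  have r2 : μ₂^3 + μ₂ + lam = 0 :=
    root_eq (μ₂ := μ₁) (μ₃ := μ₃) (by linear_combination hsC) (by linear_combination he2C)
      (by linear_combination he3C)
  have r3 : μ₃^3 + μ₃ + lam = 0 :=
    root_eq (μ₂ := μ₁) (μ₃ := μ₂) (by linear_combination hsC) (by linear_combination he2C)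
      (by linear_combination he3C)
  -- distinctness
  have heta12 : η₂ < η₁ := by rw [hη₁, hη₂]; nlinarith
  have heta23 : η₃ < η₂ := by rw [hη₂, hη₃]; nlinarith
  have heta13 : η₃ < η₁ := lt_trans heta23 heta12
  have d12 : μ₁ ≠ μ₂ := by rw [hμ₁, hμ₂]; exact mu_ne_of_eta heta12.ne'
  have d23 : μ₂ ≠ μ₃ := by rw [hμ₂, hμ₃]; exact mu_ne_of_eta heta23.ne'
  have d13 : μ₁ ≠ μ₃ := by rw [hμ₁, hμ₃]; exact mu_ne_of_eta heta13.ne'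
  -- equal exponentials at L
  have hθL : θ*L = 2*Real.pi/3 := by rw [hθ]; field_simp
  have hE13 : Complex.exp (μ₁ * (L:ℂ)) = Complex.exp (μ₃ * (L:ℂ)) := by
    rw [Complex.exp_eq_exp_iff_exists_int]
    refine ⟨(k:ℤ)+l, ?_⟩
    have hr : (η₁ - η₃)*L = ((k:ℝ)+l)*(2*Real.pi) := by
      rw [hη₁, hη₃]
      have : (θ*(2*(k:ℝ)+l) - -θ*((k:ℝ)+2*l))*L = 3*((k:ℝ)+l)*(θ*L) := by ring
      rw [this, hθL]; ring
    have hrC := congrArg (fun t : ℝ => (t:ℂ)) hr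
    push_cast at hrC
    rw [hμ₁, hμ₃]
    push_cast
    linear_combination Complex.I*hrC
  have hE23 : Complex.exp (μ₂ * (L:ℂ)) = Complex.exp (μ₃ * (L:ℂ)) := by
    rw [Complex.exp_eq_exp_iff_exists_int]
    refine ⟨(l:ℤ), ?_⟩
    have hr : (η₂ - η₃)*L = (l:ℝ)*(2*Real.pi) := by
      rw [hη₂, hη₃]
      have : (θ*((l:ℝ)-k) - -θ*((k:ℝ)+2*l))*L = 3*(l:ℝ)*(θ*L) := by ring
      rw [this, hθL]; ring
    have hrC := congrArg (fun t : ℝ => (t:ℂ)) hr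
    push_cast at hrC
    rw [hμ₂, hμ₃]
    push_cast
    linear_combination Complex.I*hrC
  -- the coefficient pattern
  set e : Fin N → ℂ := fun j => if (j:ℕ) = 0 then (1:ℂ) else if (j:ℕ) = 1 then -1 else 0
    with he_def
  have he0 : e ⟨0, by omega⟩ = 1 := by simp [he_def]
  have heN : e ⟨N-1, by omega⟩ = 0 := by
    have h0 : ¬((⟨N-1, by omega⟩ : Fin N) : ℕ) = 0 := by simp; omega
    have h1 : ¬((⟨N-1, by omega⟩ : Fin N) : ℕ) = 1 := by simp; omega
    simp only [he_def]
    rw [if_neg h0, if_neg h1]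
  refine ⟨lam, fun j => sol3 (e j * (μ₂-μ₃)) (e j * (μ₃-μ₁)) (e j * (μ₁-μ₂)) μ₁ μ₂ μ₃,
    ?_, ?_, ?_, ?_, ?_, ?_, ?_, ?_⟩
  · intro j
    exact kdv_sol3 L _ _ _ r1 r2 r3
  · intro j
    beta_reduce
    rw [sol3_zero_val, sol3_zero_val]
    ring
  · have heach : ∀ j : Fin N, iteratedDeriv 2
        (sol3 (e j * (μ₂-μ₃)) (e j * (μ₃-μ₁)) (e j * (μ₁-μ₂)) μ₁ μ₂ μ₃) 0
        = e j * ((μ₂-μ₃)*μ₁^2 + (μ₃-μ₁)*μ₂^2 + (μ₁-μ₂)*μ₃^2) := by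
      intro j
      rw [sol3_iteratedDeriv_two, sol3_zero_val]
      ring
    beta_reduce
    rw [Finset.sum_congr rfl (fun j _ => heach j), ← Finset.sum_mul]
    rw [he_def]
    rw [sum_e_zero hN, zero_mul]
  · intro j
    beta_reduce
    rw [sol3_apply]
    linear_combination (e j*(μ₂-μ₃))*hE13 + (e j*(μ₃-μ₁))*hE23
  · intro j
    beta_reduce
    rw [sol3_deriv, sol3_zero_val]
    ring
  · intro j _
    beta_reduce
    rw [sol3_deriv, sol3_apply]
    linear_combination (e j*(μ₂-μ₃)*μ₁)*hE13 + (e j*(μ₃-μ₁)*μ₂)*hE23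
  · beta_reduce
    rw [sol3_iteratedDeriv_two, sol3_apply, heN]
    ring
  · refine ⟨⟨0, by omega⟩, ?_⟩
    have hBne : (e (⟨0, by omega⟩ : Fin N) * (μ₂-μ₃))*μ₁^2 + (e ⟨0, by omega⟩ * (μ₃-μ₁))*μ₂^2
        + (e ⟨0, by omega⟩ * (μ₁-μ₂))*μ₃^2 ≠ 0 := by
      rw [he0]
      have hfact : (1:ℂ) * (μ₂-μ₃)*μ₁^2 + 1 * (μ₃-μ₁)*μ₂^2 + 1 * (μ₁-μ₂)*μ₃^2
          = -((μ₁-μ₂)*((μ₂-μ₃)*(μ₃-μ₁))) := by ring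
      rw [hfact]
      exact neg_ne_zero.mpr (mul_ne_zero (sub_ne_zero.mpr d12)
        (mul_ne_zero (sub_ne_zero.mpr d23) (sub_ne_zero.mpr (Ne.symm d13))))
    exact sol3_nontrivial hL hBne

end

theorem stmt6 (N : ℕ) (hN : 3 ≤ N) (L : ℝ) (hL : 0 < L) :
    (∃ lam : ℂ, ∃ φ : Fin N → ℝ → ℂ,
      (∀ j, KdVSpectralODE lam L (φ j)) ∧
      (∀ j, φ j 0 = φ ⟨0, by omega⟩ 0) ∧
      (∑ j, iteratedDeriv 2 (φ j) 0) = 0 ∧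
      (∀ j, φ j L = 0) ∧
      (∀ j, deriv (φ j) 0 = 0) ∧
      (∀ j : Fin N, (j : ℕ) < N - 1 → deriv (φ j) L = 0) ∧
      iteratedDeriv 2 (φ ⟨N - 1, by omega⟩) L = 0 ∧
      (∃ j, ∃ x ∈ Set.Icc (0 : ℝ) L, φ j x ≠ 0)) ↔
    L ∈ criticalN := by
  constructor
  · rintro ⟨lam, φ, hode, hsame, hsum, hbL, hd0, hdL, h2L, hnt⟩
    exact converse_main hN hL ⟨N-1, by omega⟩ rfl hode hsame hsum hbL hd0 hdL h2L hnt
  · intro hcrit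
    exact forward_direction hN hL hcrit
end

section
/- Let N > 3 and m be integers with 1 < m < N−1, and let L > 0. The following are equivalent: (i) there exist λ ∈ ℂ and functions φ₁, …, φ_N : ℝ → ℂ, not all identically zero on [0,L], each satisfying the KdV spectral ODE with parameter λ on [0,L], with the boundary conditions φ_j(0) = φ₁(0) for all j, Σ_{j=1}^N φ_j''(0) = 0, φ_j(L) = 0 and φ_j'(0) = 0 for all j, φ_j'(L) = 0 for j = 1,…,m, and φ_j''(L) = 0 for j = m+1,…,N; (ii) L belongs to 𝒩 ∪ 𝒩*. -/
/-- The critical set 𝒩* of Glass and Guerrero. -/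
def criticalNStar : Set ℝ :=
  {L : ℝ | 0 < L ∧ ∃ a b : ℂ,
    a * Complex.exp a = b * Complex.exp b ∧
    b * Complex.exp b = -(a + b) * Complex.exp (-(a + b)) ∧
    (L : ℂ) ^ 2 = -(a ^ 2 + a * b + b ^ 2)}

open Set Complex

noncomputable section


/-- building block `(c + d·x)·exp(r·x)` -/
def eSol (c d r : ℂ) : ℝ → ℂ := fun x => (c + d * x) * Complex.exp (r * x)

lemma eSol_hasDerivAt (c d r : ℂ) (x : ℝ) :
    HasDerivAt (eSol c d r) (eSol (c * r + d) (d * r) r x) x := by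
  have h1 : HasDerivAt (fun y : ℝ => c + d * (y:ℂ)) d x := by
    simpa using ((hasDerivAt_id (x:ℂ)).const_mul d).comp_ofReal.const_add c
  have h2 : HasDerivAt (fun y : ℝ => Complex.exp (r * y)) (r * Complex.exp (r * x)) x := by
    have := ((Complex.hasDerivAt_exp (r * x)).comp ((x:ℂ))
      (((hasDerivAt_id ((x:ℂ))).const_mul r))).comp_ofReal
    simpa [mul_comm] using this
  have := h1.mul h2
  convert this using 1
  · rfl
  · rfl
  · simp [eSol]; ring

lemma eSol_deriv (c d r : ℂ) : deriv (eSol c d r) = eSol (c * r + d) (d * r) r := by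
  ext x; exact (eSol_hasDerivAt c d r x).deriv

lemma eSol_differentiable (c d r : ℂ) : Differentiable ℝ (eSol c d r) :=
  fun x => (eSol_hasDerivAt c d r x).differentiableAt

lemma eSol_contDiff (c d r : ℂ) (n : WithTop ℕ∞) : ContDiff ℝ n (eSol c d r) := by
  have h1 : ContDiff ℝ n (fun y : ℝ => c + d * (y:ℂ)) :=
    contDiff_const.add (contDiff_const.mul Complex.ofRealCLM.contDiff)
  have h2 : ContDiff ℝ n (fun y : ℝ => Complex.exp (r * y)) :=
    Complex.contDiff_exp.comp (contDiff_const.mul Complex.ofRealCLM.contDiff)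
  exact h1.mul h2




lemma cd_facts {f : ℝ → ℂ} (h : ContDiff ℝ 3 f) :
    Differentiable ℝ f ∧ Differentiable ℝ (deriv f) ∧ Differentiable ℝ (deriv (deriv f)) := by
  have h3 : (3 : WithTop ℕ∞) = 2 + 1 := by norm_num
  rw [h3, contDiff_succ_iff_deriv] at h
  obtain ⟨hd, -, h⟩ := h
  have h2 : (2 : WithTop ℕ∞) = 1 + 1 := by norm_num
  rw [h2, contDiff_succ_iff_deriv] at h
  obtain ⟨hd2, -, h⟩ := h
  exact ⟨hd, hd2, h.differentiable one_ne_zero⟩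

lemma kdv_unique {lam : ℂ} {L : ℝ} {f g : ℝ → ℂ}
    (hf : KdVSpectralODE lam L f) (hg : KdVSpectralODE lam L g)
    (h0 : f 0 = g 0) (h1 : deriv f 0 = deriv g 0)
    (h2 : iteratedDeriv 2 f 0 = iteratedDeriv 2 g 0) :
    EqOn f g (Icc 0 L) := by
  set e1 := (ContinuousLinearMap.fst ℝ ℂ (ℂ × ℂ)) with he1
  set e2 := ((ContinuousLinearMap.fst ℝ ℂ ℂ).comp (ContinuousLinearMap.snd ℝ ℂ (ℂ × ℂ))) with he2
  set e3 := ((ContinuousLinearMap.snd ℝ ℂ ℂ).comp (ContinuousLinearMap.snd ℝ ℂ (ℂ × ℂ))) with he3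
  set A : (ℂ × ℂ × ℂ) →L[ℝ] (ℂ × ℂ × ℂ) := e2.prod (e3.prod ((-lam) • e1 - e2)) with hA
  have key : ∀ u : ℝ → ℂ, KdVSpectralODE lam L u →
      (ContinuousOn (fun x => (u x, deriv u x, iteratedDeriv 2 u x)) (Icc 0 L)) ∧
      (∀ t ∈ Ico 0 L, HasDerivWithinAt (fun x => (u x, deriv u x, iteratedDeriv 2 u x))
        (A (u t, deriv u t, iteratedDeriv 2 u t)) (Ici t) t) := by
    intro u hu
    obtain ⟨d1, d2, d3⟩ := cd_facts hu.1
    have hit2 : iteratedDeriv 2 u = deriv (deriv u) := by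
      rw [show (2:ℕ) = 1 + 1 from rfl, iteratedDeriv_succ, iteratedDeriv_one]
    have hit3 : iteratedDeriv 3 u = deriv (iteratedDeriv 2 u) := by
      rw [show (3:ℕ) = 2 + 1 from rfl, iteratedDeriv_succ]
    constructor
    · exact ((d1.continuous.continuousOn).prodMk
        ((d2.continuous.continuousOn).prodMk (show ContinuousOn (iteratedDeriv 2 u) (Icc 0 L) by rw [hit2]; exact d3.continuous.continuousOn)))
    · intro t ht
      have hD : HasDerivAt (fun x => (u x, deriv u x, iteratedDeriv 2 u x))
          (deriv u t, iteratedDeriv 2 u t, iteratedDeriv 3 u t) t := by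
        refine (d1 t).hasDerivAt.prodMk (HasDerivAt.prodMk ?_ ?_)
        · rw [hit2]; exact (d2 t).hasDerivAt
        · rw [hit2, hit3, hit2]; exact (d3 t).hasDerivAt
      have heq : iteratedDeriv 3 u t = -(lam * u t) - deriv u t := by
        have := hu.2 t ⟨ht.1, le_of_lt ht.2⟩; linear_combination this
      have hAval : A (u t, deriv u t, iteratedDeriv 2 u t)
          = (deriv u t, iteratedDeriv 2 u t, -(lam * u t) - deriv u t) := by
        simp [hA, he1, he2, he3]
      rw [hAval, ← heq]
      exact hD.hasDerivWithinAt
  obtain ⟨hfc, hfd⟩ := key f hf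
  obtain ⟨hgc, hgd⟩ := key g hg
  have main := ODE_solution_unique (v := fun _ p => A p) (K := ‖A‖₊)
    (fun _ => A.lipschitz) hfc hfd hgc hgd (by rw [h0, h1, h2])
  intro x hx
  exact congrArg Prod.fst (main hx)




/-- general solution: sum of three blocks, scaled by `t` -/
def gSol (t c₁ d₁ r₁ c₂ d₂ r₂ c₃ d₃ r₃ : ℂ) : ℝ → ℂ :=
  fun x => t * (eSol c₁ d₁ r₁ x + eSol c₂ d₂ r₂ x + eSol c₃ d₃ r₃ x)

lemma gSol_hasDerivAt (t c₁ d₁ r₁ c₂ d₂ r₂ c₃ d₃ r₃ : ℂ) (x : ℝ) :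
    HasDerivAt (gSol t c₁ d₁ r₁ c₂ d₂ r₂ c₃ d₃ r₃)
      (gSol t (c₁ * r₁ + d₁) (d₁ * r₁) r₁ (c₂ * r₂ + d₂) (d₂ * r₂) r₂
        (c₃ * r₃ + d₃) (d₃ * r₃) r₃ x) x :=
  (((eSol_hasDerivAt c₁ d₁ r₁ x).add (eSol_hasDerivAt c₂ d₂ r₂ x)).add
    (eSol_hasDerivAt c₃ d₃ r₃ x)).const_mul t

lemma gSol_deriv (t c₁ d₁ r₁ c₂ d₂ r₂ c₃ d₃ r₃ : ℂ) :
    deriv (gSol t c₁ d₁ r₁ c₂ d₂ r₂ c₃ d₃ r₃)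
      = gSol t (c₁ * r₁ + d₁) (d₁ * r₁) r₁ (c₂ * r₂ + d₂) (d₂ * r₂) r₂
        (c₃ * r₃ + d₃) (d₃ * r₃) r₃ :=
  funext fun x => (gSol_hasDerivAt t c₁ d₁ r₁ c₂ d₂ r₂ c₃ d₃ r₃ x).deriv

lemma gSol_contDiff (t c₁ d₁ r₁ c₂ d₂ r₂ c₃ d₃ r₃ : ℂ) (n : WithTop ℕ∞) :
    ContDiff ℝ n (gSol t c₁ d₁ r₁ c₂ d₂ r₂ c₃ d₃ r₃) :=
  (contDiff_const.mul (((eSol_contDiff c₁ d₁ r₁ n).add (eSol_contDiff c₂ d₂ r₂ n)).add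
    (eSol_contDiff c₃ d₃ r₃ n)))

lemma gSol_iteratedDeriv2 (t c₁ d₁ r₁ c₂ d₂ r₂ c₃ d₃ r₃ : ℂ) :
    iteratedDeriv 2 (gSol t c₁ d₁ r₁ c₂ d₂ r₂ c₃ d₃ r₃)
      = gSol t (c₁*r₁^2 + 2*d₁*r₁) (d₁*r₁^2) r₁ (c₂*r₂^2 + 2*d₂*r₂) (d₂*r₂^2) r₂
          (c₃*r₃^2 + 2*d₃*r₃) (d₃*r₃^2) r₃ := by
  rw [show (2:ℕ) = 1 + 1 from rfl, iteratedDeriv_succ, iteratedDeriv_one, gSol_deriv, gSol_deriv]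
  ring_nf

lemma gSol_iteratedDeriv3 (t c₁ d₁ r₁ c₂ d₂ r₂ c₃ d₃ r₃ : ℂ) :
    iteratedDeriv 3 (gSol t c₁ d₁ r₁ c₂ d₂ r₂ c₃ d₃ r₃)
      = gSol t (c₁*r₁^3 + 3*d₁*r₁^2) (d₁*r₁^3) r₁ (c₂*r₂^3 + 3*d₂*r₂^2) (d₂*r₂^3) r₂
          (c₃*r₃^3 + 3*d₃*r₃^2) (d₃*r₃^3) r₃ := by
  rw [show (3:ℕ) = 2 + 1 from rfl, iteratedDeriv_succ, gSol_iteratedDeriv2, gSol_deriv]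
  ring_nf

lemma gSol_kdv {lam : ℂ} (L : ℝ) (t c₁ d₁ r₁ c₂ d₂ r₂ c₃ d₃ r₃ : ℂ)
    (h1 : r₁^3 + r₁ + lam = 0) (h2 : r₂^3 + r₂ + lam = 0) (h3 : r₃^3 + r₃ + lam = 0)
    (hd1 : d₁ = 0 ∨ 3*r₁^2 + 1 = 0) (hd2 : d₂ = 0 ∨ 3*r₂^2 + 1 = 0)
    (hd3 : d₃ = 0 ∨ 3*r₃^2 + 1 = 0) :
    KdVSpectralODE lam L (gSol t c₁ d₁ r₁ c₂ d₂ r₂ c₃ d₃ r₃) := by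
  refine ⟨gSol_contDiff _ _ _ _ _ _ _ _ _ _ _, ?_⟩
  intro x _
  rw [gSol_deriv, gSol_iteratedDeriv3]
  have term : ∀ c d r : ℂ, r^3 + r + lam = 0 → (d = 0 ∨ 3*r^2 + 1 = 0) →
      lam * eSol c d r x + eSol (c*r + d) (d*r) r x + eSol (c*r^3 + 3*d*r^2) (d*r^3) r x = 0 := by
    intro c d r h hd
    simp only [eSol]
    rcases hd with hd | hd
    · subst hd; linear_combination (Complex.exp (r * x)) * c * h
    · linear_combination (Complex.exp (r*x)) * (c + d*x) * h + (Complex.exp (r*x)) * d * hd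
  have e1 := term c₁ d₁ r₁ h1 hd1
  have e2 := term c₂ d₂ r₂ h2 hd2
  have e3 := term c₃ d₃ r₃ h3 hd3
  simp only [gSol]
  linear_combination t * e1 + t * e2 + t * e3



/-- kernel of the 2×3 system `ΣA = 0, Σ wᵢAᵢ = 0` -/
lemma ker2 {A₁ A₂ A₃ w₁ w₂ w₃ : ℂ} (h0 : A₁ + A₂ + A₃ = 0)
    (h1 : w₁*A₁ + w₂*A₂ + w₃*A₃ = 0) (hw : w₁ ≠ w₂ ∨ w₂ ≠ w₃ ∨ w₁ ≠ w₃) :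
    ∃ u : ℂ, A₁ = u * (w₂ - w₃) ∧ A₂ = u * (w₃ - w₁) ∧ A₃ = u * (w₁ - w₂) := by
  rcases hw with hw | hw | hw
  · have hne : w₁ - w₂ ≠ 0 := sub_ne_zero.mpr hw
    refine ⟨A₃ / (w₁ - w₂), ?_, ?_, ?_⟩
    · rw [div_mul_eq_mul_div, eq_div_iff hne]; linear_combination h1 - w₂ * h0
    · rw [div_mul_eq_mul_div, eq_div_iff hne]; linear_combination w₁ * h0 - h1
    · rw [div_mul_eq_mul_div, eq_div_iff hne]
  · have hne : w₂ - w₃ ≠ 0 := sub_ne_zero.mpr hw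
    refine ⟨A₁ / (w₂ - w₃), ?_, ?_, ?_⟩
    · rw [div_mul_eq_mul_div, eq_div_iff hne]
    · rw [div_mul_eq_mul_div, eq_div_iff hne]; linear_combination h1 - w₃ * h0
    · rw [div_mul_eq_mul_div, eq_div_iff hne]; linear_combination w₂ * h0 - h1
  · have hne : w₃ - w₁ ≠ 0 := sub_ne_zero.mpr (Ne.symm hw)
    refine ⟨A₂ / (w₃ - w₁), ?_, ?_, ?_⟩
    · rw [div_mul_eq_mul_div, eq_div_iff hne]; linear_combination w₃ * h0 - h1
    · rw [div_mul_eq_mul_div, eq_div_iff hne]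
    · rw [div_mul_eq_mul_div, eq_div_iff hne]; linear_combination h1 - w₁ * h0

lemma vand3 {r₁ r₂ r₃ X₁ X₂ X₃ : ℂ} (h12 : r₁ ≠ r₂) (h13 : r₁ ≠ r₃) (h23 : r₂ ≠ r₃)
    (e0 : X₁ + X₂ + X₃ = 0) (e1 : r₁*X₁ + r₂*X₂ + r₃*X₃ = 0)
    (e2 : r₁^2*X₁ + r₂^2*X₂ + r₃^2*X₃ = 0) : X₁ = 0 ∧ X₂ = 0 ∧ X₃ = 0 := by
  obtain ⟨u, hu1, hu2, hu3⟩ := ker2 e0 e1 (Or.inl h12)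
  have key : u * (-(r₁ - r₂) * (r₂ - r₃) * (r₃ - r₁)) = 0 := by
    rw [hu1, hu2, hu3] at e2; linear_combination e2
  have hu : u = 0 := by
    rcases mul_eq_zero.mp key with h | h
    · exact h
    · exfalso
      rcases mul_eq_zero.mp h with h' | h'
      · rcases mul_eq_zero.mp h' with h'' | h''
        · exact h12 (by linear_combination -h'')
        · exact h23 (sub_eq_zero.mp h'')
      · exact h13 (sub_eq_zero.mp h').symm
  refine ⟨?_, ?_, ?_⟩ <;> simp [hu1, hu2, hu3, hu]

lemma roots_exist (lam : ℂ) : ∃ r₁ r₂ r₃ : ℂ,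
    r₁ + r₂ + r₃ = 0 ∧ r₁*r₂ + r₁*r₃ + r₂*r₃ = 1 ∧ r₁*r₂*r₃ = -lam := by
  have sqrt_exists : ∀ z : ℂ, ∃ w : ℂ, w^2 = z := by
    intro z
    by_cases hz : z = 0
    · exact ⟨0, by simp [hz]⟩
    · refine ⟨Complex.exp (Complex.log z / 2), ?_⟩
      rw [sq, ← Complex.exp_add,
        show Complex.log z / 2 + Complex.log z / 2 = Complex.log z by ring]
      exact Complex.exp_log hz
  have cubic_root : ∃ r : ℂ, r^3 + r + lam = 0 := by
    have hlt : (Polynomial.X + Polynomial.C lam : Polynomial ℂ).degree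
        < (Polynomial.X ^ 3 : Polynomial ℂ).degree := by
      apply lt_of_le_of_lt (Polynomial.degree_add_le _ _)
      simp only [Polynomial.degree_X, Polynomial.degree_X_pow]
      refine max_lt (by exact_mod_cast by norm_num)
        (lt_of_le_of_lt Polynomial.degree_C_le (by exact_mod_cast by norm_num))
    have hdeg : (Polynomial.X^3 + (Polynomial.X + Polynomial.C lam) : Polynomial ℂ).degree
        = ((3:ℕ) : WithBot ℕ) := by
      rw [Polynomial.degree_add_eq_left_of_degree_lt hlt, Polynomial.degree_X_pow]
    obtain ⟨r, hr⟩ := Complex.exists_root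
      (f := Polynomial.X^3 + (Polynomial.X + Polynomial.C lam))
      (by rw [hdeg]; exact_mod_cast Nat.succ_pos 2)
    refine ⟨r, ?_⟩
    have := hr
    simp only [Polynomial.IsRoot, Polynomial.eval_add, Polynomial.eval_pow,
      Polynomial.eval_X, Polynomial.eval_C] at this
    linear_combination this
  obtain ⟨r, hroot⟩ := cubic_root
  obtain ⟨w, hw⟩ := sqrt_exists (-3*r^2 - 4)
  refine ⟨r, (-r + w)/2, (-r - w)/2, by ring, ?_, ?_⟩
  · linear_combination (-1/4 : ℂ) * hw
  · linear_combination (-r/4) * hw + hroot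

/-- each of the symmetric-function roots satisfies the cubic -/
lemma cubic_of_sym {r₁ r₂ r₃ lam : ℂ} (hs : r₁ + r₂ + r₃ = 0)
    (hp : r₁*r₂ + r₁*r₃ + r₂*r₃ = 1) (hq : r₁*r₂*r₃ = -lam) :
    r₁^3 + r₁ + lam = 0 ∧ r₂^3 + r₂ + lam = 0 ∧ r₃^3 + r₃ + lam = 0 := by
  have h3 : r₃ = -r₁ - r₂ := by linear_combination hs
  subst h3
  refine ⟨by linear_combination (-r₁) * hp + hq, by linear_combination (-r₂) * hp + hq,
    by linear_combination (r₁ + r₂) * hp + hq⟩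

lemma double_root_struct {r₁ r₂ r₃ lam : ℂ} (hs : r₁ + r₂ + r₃ = 0)
    (hp : r₁*r₂ + r₁*r₃ + r₂*r₃ = 1) (hq : r₁*r₂*r₃ = -lam)
    (hnd : ¬(r₁ ≠ r₂ ∧ r₁ ≠ r₃ ∧ r₂ ≠ r₃)) :
    ∃ μ : ℂ, 3*μ^2 + 1 = 0 ∧ lam = 2*μ^3 := by
  push_neg at hnd
  by_cases h12 : r₁ = r₂
  · subst h12
    have h3 : r₃ = -2*r₁ := by linear_combination hs
    subst h3
    exact ⟨r₁, by linear_combination -hp, by linear_combination hq⟩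
  by_cases h13 : r₁ = r₃
  · subst h13
    have h3 : r₂ = -2*r₁ := by linear_combination hs
    subst h3
    exact ⟨r₁, by linear_combination -hp, by linear_combination hq⟩
  have h23 : r₂ = r₃ := hnd h12 h13
  subst h23
  have h3 : r₁ = -2*r₂ := by linear_combination hs
  subst h3
  exact ⟨r₂, by linear_combination -hp, by linear_combination hq⟩

/-- squares of distinct roots summing to zero are not all equal -/
lemma sq_ne {r₁ r₂ r₃ : ℂ} (h12 : r₁ ≠ r₂) (h13 : r₁ ≠ r₃) (h23 : r₂ ≠ r₃) :
    r₁^2 ≠ r₂^2 ∨ r₂^2 ≠ r₃^2 ∨ r₁^2 ≠ r₃^2 := by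
  by_contra h
  push_neg at h
  obtain ⟨e12, e23, e13⟩ := h
  have k12 : r₂ = -r₁ := by
    rcases mul_eq_zero.mp (show (r₁ - r₂) * (r₁ + r₂) = 0 by linear_combination e12) with h | h
    · exact absurd (sub_eq_zero.mp h) h12
    · linear_combination h
  have k13 : r₃ = -r₁ := by
    rcases mul_eq_zero.mp (show (r₁ - r₃) * (r₁ + r₃) = 0 by linear_combination e13) with h | h
    · exact absurd (sub_eq_zero.mp h) h13
    · linear_combination h
  exact h23 (k12.trans k13.symm)

lemma derivEqOnIcc {L : ℝ} (hL : 0 < L) {f g : ℝ → ℂ} (hf : Differentiable ℝ f)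
    (hg : Differentiable ℝ g) (h : EqOn f g (Icc 0 L)) :
    EqOn (deriv f) (deriv g) (Icc 0 L) := by
  intro x hx
  have h1 : HasDerivWithinAt f (deriv f x) (Icc 0 L) x := (hf x).hasDerivAt.hasDerivWithinAt
  have h2 : HasDerivWithinAt f (deriv g x) (Icc 0 L) x :=
    ((hg x).hasDerivAt.hasDerivWithinAt).congr (fun y hy => h hy) (h hx)
  exact ((uniqueDiffOn_Icc hL) x hx).eq_deriv _ h1 h2

lemma gSol_eval (t c₁ d₁ r₁ c₂ d₂ r₂ c₃ d₃ r₃ : ℂ) (x : ℝ) :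
    gSol t c₁ d₁ r₁ c₂ d₂ r₂ c₃ d₃ r₃ x
      = t * ((c₁ + d₁*x) * Complex.exp (r₁*x) + (c₂ + d₂*x) * Complex.exp (r₂*x)
        + (c₃ + d₃*x) * Complex.exp (r₃*x)) := rfl

lemma gSol_differentiable (t c₁ d₁ r₁ c₂ d₂ r₂ c₃ d₃ r₃ : ℂ) :
    Differentiable ℝ (gSol t c₁ d₁ r₁ c₂ d₂ r₂ c₃ d₃ r₃) :=
  (gSol_contDiff t c₁ d₁ r₁ c₂ d₂ r₂ c₃ d₃ r₃ 1).differentiable one_ne_zero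

/-- representation of a KdV solution in the distinct-roots case -/
lemma rep_distinct {lam : ℂ} {L : ℝ} {r₁ r₂ r₃ : ℂ}
    (h1 : r₁^3 + r₁ + lam = 0) (h2 : r₂^3 + r₂ + lam = 0) (h3 : r₃^3 + r₃ + lam = 0)
    (h12 : r₁ ≠ r₂) (h13 : r₁ ≠ r₃) (h23 : r₂ ≠ r₃)
    {φ : ℝ → ℂ} (hφ : KdVSpectralODE lam L φ) (hL : 0 < L) :
    ∃ C₁ C₂ C₃ : ℂ, ∀ x ∈ Icc (0:ℝ) L,
      φ x = C₁ * exp (r₁*x) + C₂ * exp (r₂*x) + C₃ * exp (r₃*x) ∧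
      deriv φ x = C₁*r₁ * exp (r₁*x) + C₂*r₂ * exp (r₂*x) + C₃*r₃ * exp (r₃*x) ∧
      iteratedDeriv 2 φ x
        = C₁*r₁^2 * exp (r₁*x) + C₂*r₂^2 * exp (r₂*x) + C₃*r₃^2 * exp (r₃*x) := by
  have n12 : r₁ - r₂ ≠ 0 := sub_ne_zero.mpr h12
  have n13 : r₁ - r₃ ≠ 0 := sub_ne_zero.mpr h13
  have n23 : r₂ - r₃ ≠ 0 := sub_ne_zero.mpr h23
  set c₀ := φ 0 with hc₀
  set c₁ := deriv φ 0 with hc₁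
  set c₂ := iteratedDeriv 2 φ 0 with hc₂
  set C₁ := (c₂ - (r₂+r₃)*c₁ + r₂*r₃*c₀) / ((r₁-r₂)*(r₁-r₃)) with hC₁
  set C₂ := -(c₂ - (r₁+r₃)*c₁ + r₁*r₃*c₀) / ((r₁-r₂)*(r₂-r₃)) with hC₂
  set C₃ := (c₂ - (r₁+r₂)*c₁ + r₁*r₂*c₀) / ((r₁-r₃)*(r₂-r₃)) with hC₃
  have E0 : C₁ + C₂ + C₃ = c₀ := by rw [hC₁, hC₂, hC₃]; field_simp; ring
  have E1 : C₁*r₁ + C₂*r₂ + C₃*r₃ = c₁ := by rw [hC₁, hC₂, hC₃]; field_simp; ring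
  have E2 : C₁*r₁^2 + C₂*r₂^2 + C₃*r₃^2 = c₂ := by rw [hC₁, hC₂, hC₃]; field_simp; ring
  set g := gSol 1 C₁ 0 r₁ C₂ 0 r₂ C₃ 0 r₃ with hgdef
  have hg : KdVSpectralODE lam L g :=
    gSol_kdv L 1 C₁ 0 r₁ C₂ 0 r₂ C₃ 0 r₃ h1 h2 h3 (Or.inl rfl) (Or.inl rfl) (Or.inl rfl)
  have hgd : deriv g = gSol 1 (C₁*r₁+0) (0*r₁) r₁ (C₂*r₂+0) (0*r₂) r₂ (C₃*r₃+0) (0*r₃) r₃ :=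
    gSol_deriv 1 C₁ 0 r₁ C₂ 0 r₂ C₃ 0 r₃
  have hgdd : iteratedDeriv 2 g
      = gSol 1 (C₁*r₁^2+2*0*r₁) (0*r₁^2) r₁ (C₂*r₂^2+2*0*r₂) (0*r₂^2) r₂
          (C₃*r₃^2+2*0*r₃) (0*r₃^2) r₃ :=
    gSol_iteratedDeriv2 1 C₁ 0 r₁ C₂ 0 r₂ C₃ 0 r₃
  have heq : EqOn φ g (Icc 0 L) := by
    apply kdv_unique hφ hg
    · rw [← hc₀, hgdef]
      simp only [gSol_eval, Complex.ofReal_zero, mul_zero, zero_mul, Complex.exp_zero,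
        mul_one, add_zero]
      linear_combination -E0
    · rw [← hc₁, hgd]
      simp only [gSol_eval, Complex.ofReal_zero, mul_zero, zero_mul, Complex.exp_zero,
        mul_one, add_zero]
      linear_combination -E1
    · rw [← hc₂, hgdd]
      simp only [gSol_eval, Complex.ofReal_zero, mul_zero, zero_mul, Complex.exp_zero,
        mul_one, add_zero]
      linear_combination -E2
  have hit2 : ∀ u : ℝ → ℂ, iteratedDeriv 2 u = deriv (deriv u) := by
    intro u; rw [show (2:ℕ) = 1 + 1 from rfl, iteratedDeriv_succ, iteratedDeriv_one]
  have hd1 : EqOn (deriv φ) (deriv g) (Icc 0 L) :=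
    derivEqOnIcc hL (cd_facts hφ.1).1 (gSol_differentiable _ _ _ _ _ _ _ _ _ _) heq
  have hd2 : EqOn (deriv (deriv φ)) (deriv (deriv g)) (Icc 0 L) := by
    apply derivEqOnIcc hL (cd_facts hφ.1).2.1 _ hd1
    rw [hgd]; exact gSol_differentiable _ _ _ _ _ _ _ _ _ _
  refine ⟨C₁, C₂, C₃, fun x hx => ⟨?_, ?_, ?_⟩⟩
  · rw [heq hx, hgdef, gSol_eval]; ring
  · rw [hd1 hx, hgd, gSol_eval]; ring
  · rw [hit2 φ, hd2 hx, ← hit2 g, hgdd, gSol_eval]; ring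

/-- representation of a KdV solution in the double-root case -/
lemma rep_double {lam μ : ℂ} (hμ : 3*μ^2 + 1 = 0) (hlam : lam = 2*μ^3)
    {L : ℝ} (hL : 0 < L) {φ : ℝ → ℂ} (hφ : KdVSpectralODE lam L φ) :
    ∃ α β γ : ℂ, ∀ x ∈ Icc (0:ℝ) L,
      φ x = (α + β*x) * exp (μ*x) + γ * exp ((-2*μ)*x) ∧
      deriv φ x = (α*μ + β + β*μ*x) * exp (μ*x) + (-2*μ)*γ * exp ((-2*μ)*x) ∧
      iteratedDeriv 2 φ x
        = (α*μ^2 + 2*β*μ + β*μ^2*x) * exp (μ*x) + 4*μ^2*γ * exp ((-2*μ)*x) := by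
  have hμ0 : μ ≠ 0 := by intro h; rw [h] at hμ; norm_num at hμ
  set c₀ := φ 0 with hc₀
  set c₁ := deriv φ 0 with hc₁
  set c₂ := iteratedDeriv 2 φ 0 with hc₂
  set γ := (c₂ + μ^2*c₀ - 2*μ*c₁) / (9*μ^2) with hγdef
  set α := c₀ - γ with hαdef
  set β := c₁ - μ*c₀ + 3*μ*γ with hβdef
  have hγ : 9*μ^2*γ = c₂ + μ^2*c₀ - 2*μ*c₁ := by rw [hγdef]; field_simp
  have Eq0 : α + γ = c₀ := by rw [hαdef]; ring
  have Eq1 : α*μ + β + γ*(-2*μ) = c₁ := by rw [hαdef, hβdef]; ring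
  have Eq2 : α*μ^2 + 2*β*μ + γ*(-2*μ)^2 = c₂ := by
    rw [hαdef, hβdef]; linear_combination hγ
  have hcμ : μ^3 + μ + lam = 0 := by linear_combination μ*hμ + hlam
  have hcν : (-2*μ)^3 + (-2*μ) + lam = 0 := by linear_combination (-2*μ)*hμ + hlam
  set g := gSol 1 α β μ γ 0 (-2*μ) 0 0 μ with hgdef
  have hg : KdVSpectralODE lam L g :=
    gSol_kdv L 1 α β μ γ 0 (-2*μ) 0 0 μ hcμ hcν hcμ (Or.inr hμ) (Or.inl rfl) (Or.inl rfl)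
  have hgd : deriv g = gSol 1 (α*μ+β) (β*μ) μ (γ*(-2*μ)+0) (0*(-2*μ)) (-2*μ) (0*μ+0) (0*μ) μ :=
    gSol_deriv 1 α β μ γ 0 (-2*μ) 0 0 μ
  have hgdd : iteratedDeriv 2 g
      = gSol 1 (α*μ^2+2*β*μ) (β*μ^2) μ (γ*(-2*μ)^2+2*0*(-2*μ)) (0*(-2*μ)^2) (-2*μ)
          (0*μ^2+2*0*μ) (0*μ^2) μ :=
    gSol_iteratedDeriv2 1 α β μ γ 0 (-2*μ) 0 0 μ
  have heq : EqOn φ g (Icc 0 L) := by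
    apply kdv_unique hφ hg
    · rw [← hc₀, hgdef]
      simp only [gSol_eval, Complex.ofReal_zero, mul_zero, zero_mul, Complex.exp_zero,
        mul_one, add_zero]
      linear_combination -Eq0
    · rw [← hc₁, hgd]
      simp only [gSol_eval, Complex.ofReal_zero, mul_zero, zero_mul, Complex.exp_zero,
        mul_one, add_zero]
      linear_combination -Eq1
    · rw [← hc₂, hgdd]
      simp only [gSol_eval, Complex.ofReal_zero, mul_zero, zero_mul, Complex.exp_zero,
        mul_one, add_zero]
      linear_combination -Eq2
  have hit2 : ∀ u : ℝ → ℂ, iteratedDeriv 2 u = deriv (deriv u) := by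
    intro u; rw [show (2:ℕ) = 1 + 1 from rfl, iteratedDeriv_succ, iteratedDeriv_one]
  have hd1 : EqOn (deriv φ) (deriv g) (Icc 0 L) :=
    derivEqOnIcc hL (cd_facts hφ.1).1 (gSol_differentiable _ _ _ _ _ _ _ _ _ _) heq
  have hd2 : EqOn (deriv (deriv φ)) (deriv (deriv g)) (Icc 0 L) := by
    apply derivEqOnIcc hL (cd_facts hφ.1).2.1 _ hd1
    rw [hgd]; exact gSol_differentiable _ _ _ _ _ _ _ _ _ _
  refine ⟨α, β, γ, fun x hx => ⟨?_, ?_, ?_⟩⟩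
  · rw [heq hx, hgdef, gSol_eval]; ring
  · rw [hd1 hx, hgd, gSol_eval]; ring
  · rw [hit2 φ, hd2 hx, ← hit2 g, hgdd, gSol_eval]; ring


lemma quad_form_pos (k' l' : ℤ) (hk : k' ≠ 0) (hl : l' ≠ 0) (hkl : k' + l' ≠ 0) :
    ∃ k l : ℕ, 0 < k ∧ 0 < l ∧
      ((k:ℤ)^2 + (k:ℤ)*(l:ℤ) + (l:ℤ)^2) = k'^2 + k'*l' + l'^2 := by
  have main : ∃ a b : ℤ, 0 < a ∧ 0 < b ∧ a^2 + a*b + b^2 = k'^2 + k'*l' + l'^2 := by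
    rcases lt_or_gt_of_ne hk with hkneg | hkpos
    · rcases lt_or_gt_of_ne hl with hlneg | hlpos
      · exact ⟨-k', -l', by omega, by omega, by ring⟩
      · rcases lt_or_gt_of_ne hkl with hs | hs
        · exact ⟨-k'-l', l', by omega, by omega, by ring⟩
        · exact ⟨k'+l', -k', by omega, by omega, by ring⟩
    · rcases lt_or_gt_of_ne hl with hlneg | hlpos
      · rcases lt_or_gt_of_ne hkl with hs | hs
        · exact ⟨-k'-l', k', by omega, by omega, by ring⟩
        · exact ⟨k'+l', -l', by omega, by omega, by ring⟩
      · exact ⟨k', l', by omega, by omega, by ring⟩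
  obtain ⟨a, b, ha, hb, hab⟩ := main
  refine ⟨a.toNat, b.toNat, by omega, by omega, ?_⟩
  rw [Int.toNat_of_nonneg ha.le, Int.toNat_of_nonneg hb.le]
  exact hab

lemma rosier_arith {r₁ r₂ r₃ : ℂ} {L : ℝ} (hL : 0 < L)
    (hs : r₁ + r₂ + r₃ = 0) (hp : r₁*r₂ + r₁*r₃ + r₂*r₃ = 1)
    (h12 : r₁ ≠ r₂) (h13 : r₁ ≠ r₃) (h23 : r₂ ≠ r₃)
    (e12 : Complex.exp (r₁*L) = Complex.exp (r₂*L))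
    (e23 : Complex.exp (r₂*L) = Complex.exp (r₃*L)) :
    L ∈ criticalN := by
  obtain ⟨k', hk'⟩ := Complex.exp_eq_exp_iff_exists_int.mp e12
  obtain ⟨l', hl'⟩ := Complex.exp_eq_exp_iff_exists_int.mp e23
  have hLC : (L:ℂ) ≠ 0 := Complex.ofReal_ne_zero.mpr (ne_of_gt hL)
  have PI := Complex.I_sq
  have hkne : k' ≠ 0 := by
    intro h; rw [h] at hk'; push_cast at hk'
    exact h12 (mul_right_cancel₀ hLC (by linear_combination hk'))
  have hlne : l' ≠ 0 := by
    intro h; rw [h] at hl'; push_cast at hl'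
    exact h23 (mul_right_cancel₀ hLC (by linear_combination hl'))
  have hklne : k' + l' ≠ 0 := by
    intro h
    have h13' : r₁*(L:ℂ) = r₃*L + ((k':ℂ) + (l':ℂ))*(2*(Real.pi:ℂ)*Complex.I) := by
      linear_combination hk' + hl'
    have hz : (k':ℂ) + (l':ℂ) = 0 := by exact_mod_cast congrArg (Int.cast : ℤ → ℂ) h
    rw [hz] at h13'
    exact h13 (mul_right_cancel₀ hLC (by linear_combination h13'))
  have hsL : r₁*(L:ℂ) + r₂*L + r₃*L = 0 := by linear_combination (L:ℂ)*hs
  have hr2 : r₂*(L:ℂ) = ((l':ℂ) - k')*(2*(Real.pi:ℂ)*Complex.I)/3 := by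
    linear_combination (hsL - hk' + hl')/3
  have hr1 : r₁*(L:ℂ) = ((l':ℂ) + 2*k')*(2*(Real.pi:ℂ)*Complex.I)/3 := by
    linear_combination hk' + hr2
  have hr3 : r₃*(L:ℂ) = -((k':ℂ) + 2*l')*(2*(Real.pi:ℂ)*Complex.I)/3 := by
    linear_combination hr2 - hl'
  have hpL : (r₁*(L:ℂ))*(r₂*L) + (r₁*(L:ℂ))*(r₃*L) + (r₂*(L:ℂ))*(r₃*L) = (L:ℂ)^2 := by
    linear_combination (L:ℂ)^2*hp
  rw [hr1, hr2, hr3] at hpL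
  have key : (L:ℂ)^2*3 = 4*(Real.pi:ℂ)^2*((k':ℂ)^2 + (k':ℂ)*(l':ℂ) + (l':ℂ)^2) := by
    linear_combination (-3)*hpL
      - 4*(Real.pi:ℂ)^2*((k':ℂ)^2 + (k':ℂ)*(l':ℂ) + (l':ℂ)^2)*PI
  have keyR : L^2*3 = 4*Real.pi^2*((k':ℝ)^2 + (k':ℝ)*(l':ℝ) + (l':ℝ)^2) := by
    apply Complex.ofReal_inj.mp
    push_cast
    linear_combination key
  obtain ⟨k, l, hkpos, hlpos, hQ⟩ := quad_form_pos k' l' hkne hlne hklne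
  have hQR : ((k:ℝ)^2 + (k:ℝ)*(l:ℝ) + (l:ℝ)^2) = ((k':ℝ)^2 + (k':ℝ)*(l':ℝ) + (l':ℝ)^2) := by
    exact_mod_cast congrArg (Int.cast : ℤ → ℝ) hQ
  refine ⟨k, l, hkpos, hlpos, ?_⟩
  set R := (2 * Real.pi / Real.sqrt 3) * Real.sqrt ((k : ℝ) ^ 2 + (k : ℝ) * l + (l : ℝ) ^ 2)
    with hRdef
  have hQpos : (0:ℝ) < (k : ℝ) ^ 2 + (k : ℝ) * l + (l : ℝ) ^ 2 := by positivity
  have hRpos : 0 < R := by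
    rw [hRdef]
    have h3 : (0:ℝ) < Real.sqrt 3 := Real.sqrt_pos.mpr (by norm_num)
    positivity
  have hR2 : R^2 = L^2 := by
    rw [hRdef, mul_pow, div_pow, mul_pow, Real.sq_sqrt hQpos.le,
      Real.sq_sqrt (by norm_num : (0:ℝ) ≤ 3)]
    rw [hQR]
    linear_combination (-1/3)*keyR
  have hfac : (L - R)*(L + R) = 0 := by linear_combination -hR2
  rcases mul_eq_zero.mp hfac with h | h
  · exact sub_eq_zero.mp h
  · linarith

lemma gg_arith {r₁ r₂ r₃ w : ℂ} {L : ℝ} (hL : 0 < L)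
    (hs : r₁ + r₂ + r₃ = 0) (hp : r₁*r₂ + r₁*r₃ + r₂*r₃ = 1)
    (hE1 : Complex.exp (r₁*L) = w*r₁) (hE2 : Complex.exp (r₂*L) = w*r₂)
    (hE3 : Complex.exp (r₃*L) = w*r₃) :
    L ∈ criticalNStar := by
  have hw : w ≠ 0 := by
    intro h; rw [h, zero_mul] at hE1; exact Complex.exp_ne_zero _ hE1
  have hr1 : r₁ ≠ 0 := by
    intro h; rw [h, mul_zero] at hE1; exact Complex.exp_ne_zero _ hE1
  have hr2 : r₂ ≠ 0 := by
    intro h; rw [h, mul_zero] at hE2; exact Complex.exp_ne_zero _ hE2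
  have hr3 : r₃ ≠ 0 := by
    intro h; rw [h, mul_zero] at hE3; exact Complex.exp_ne_zero _ hE3
  refine ⟨hL, -(r₁*(L:ℂ)), -(r₂*(L:ℂ)), ?_, ?_, ?_⟩
  · rw [Complex.exp_neg, Complex.exp_neg, hE1, hE2]
    field_simp
  · have hab : -((-(r₁*(L:ℂ))) + (-(r₂*(L:ℂ)))) = -(r₃*(L:ℂ)) := by
      linear_combination (L:ℂ)*hs
    rw [hab, Complex.exp_neg, Complex.exp_neg, hE2, hE3]
    field_simp
  · have hkey : r₁^2 + r₁*r₂ + r₂^2 = -1 := by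
      linear_combination (r₁ + r₂)*hs - hp
    linear_combination (L:ℂ)^2 * hkey

lemma Lsq_ne_neg3 {L : ℝ} (h : (L:ℂ)^2 = -3) : False := by
  have : (L^2 : ℝ) = ((-3 : ℝ)) := by exact_mod_cast h
  nlinarith [sq_nonneg L]


section ForwardCore

/-- v = 0, type A, distinct roots: all exponentials equal -/
lemma caseA0 {r₁ r₂ r₃ E₁ E₂ E₃ C₁ C₂ C₃ : ℂ}
    (h12 : r₁ ≠ r₂) (h13 : r₁ ≠ r₃) (h23 : r₂ ≠ r₃)
    (S0 : C₁ + C₂ + C₃ = 0) (S1 : r₁*C₁ + r₂*C₂ + r₃*C₃ = 0)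
    (SL : C₁*E₁ + C₂*E₂ + C₃*E₃ = 0)
    (SLd : r₁*(C₁*E₁) + r₂*(C₂*E₂) + r₃*(C₃*E₃) = 0)
    (hC : ¬(C₁ = 0 ∧ C₂ = 0 ∧ C₃ = 0)) : E₁ = E₂ ∧ E₂ = E₃ := by
  have n12 : r₁ - r₂ ≠ 0 := sub_ne_zero.mpr h12
  have n13 : r₃ - r₁ ≠ 0 := sub_ne_zero.mpr (Ne.symm h13)
  have n23 : r₂ - r₃ ≠ 0 := sub_ne_zero.mpr h23
  obtain ⟨t, ht1, ht2, ht3⟩ := ker2 S0 S1 (Or.inl h12)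
  obtain ⟨u, hu1, hu2, hu3⟩ := ker2 SL SLd (Or.inl h12)
  have ht0 : t ≠ 0 := by
    intro h; rw [h, zero_mul] at ht1 ht2 ht3; exact hC ⟨ht1, ht2, ht3⟩
  have e1 : (t*E₁)*(r₂-r₃) = u*(r₂-r₃) := by linear_combination hu1 - E₁*ht1
  have e2 : (t*E₂)*(r₃-r₁) = u*(r₃-r₁) := by linear_combination hu2 - E₂*ht2
  have e3 : (t*E₃)*(r₂-r₃) = u*(r₂-r₃) := by
    have e3' : (t*E₃)*(r₁-r₂) = u*(r₁-r₂) := by linear_combination hu3 - E₃*ht3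
    have := mul_right_cancel₀ (sub_ne_zero.mpr h12) e3'
    linear_combination (r₂-r₃)*this
  have k1 : t*E₁ = u := mul_right_cancel₀ n23 e1
  have k2 : t*E₂ = u := mul_right_cancel₀ n13 e2
  have k3 : t*E₃ = u := mul_right_cancel₀ n23 e3
  exact ⟨mul_left_cancel₀ ht0 (k1.trans k2.symm), mul_left_cancel₀ ht0 (k2.trans k3.symm)⟩

/-- v = 0, type B, distinct roots: exponentials proportional to roots -/
lemma caseB0 {r₁ r₂ r₃ E₁ E₂ E₃ C₁ C₂ C₃ : ℂ}
    (h12 : r₁ ≠ r₂) (h13 : r₁ ≠ r₃) (h23 : r₂ ≠ r₃) (hs : r₁ + r₂ + r₃ = 0)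
    (S0 : C₁ + C₂ + C₃ = 0) (S1 : r₁*C₁ + r₂*C₂ + r₃*C₃ = 0)
    (SL : C₁*E₁ + C₂*E₂ + C₃*E₃ = 0)
    (SLdd : r₁^2*(C₁*E₁) + r₂^2*(C₂*E₂) + r₃^2*(C₃*E₃) = 0)
    (hC : ¬(C₁ = 0 ∧ C₂ = 0 ∧ C₃ = 0)) :
    ∃ w : ℂ, E₁ = w*r₁ ∧ E₂ = w*r₂ ∧ E₃ = w*r₃ := by
  have n12 : r₁ - r₂ ≠ 0 := sub_ne_zero.mpr h12
  have n13 : r₃ - r₁ ≠ 0 := sub_ne_zero.mpr (Ne.symm h13)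
  have n23 : r₂ - r₃ ≠ 0 := sub_ne_zero.mpr h23
  obtain ⟨t, ht1, ht2, ht3⟩ := ker2 S0 S1 (Or.inl h12)
  obtain ⟨s, hs1, hs2, hs3⟩ := ker2 SL SLdd (sq_ne h12 h13 h23)
  have ht0 : t ≠ 0 := by
    intro h; rw [h, zero_mul] at ht1 ht2 ht3; exact hC ⟨ht1, ht2, ht3⟩
  have e1 : (t*E₁)*(r₂-r₃) = (-s*r₁)*(r₂-r₃) := by
    linear_combination hs1 - E₁*ht1 + s*(r₂-r₃)*hs
  have e2 : (t*E₂)*(r₃-r₁) = (-s*r₂)*(r₃-r₁) := by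
    linear_combination hs2 - E₂*ht2 + s*(r₃-r₁)*hs
  have e3 : (t*E₃)*(r₁-r₂) = (-s*r₃)*(r₁-r₂) := by
    linear_combination hs3 - E₃*ht3 + s*(r₁-r₂)*hs
  have k1 : t*E₁ = -s*r₁ := mul_right_cancel₀ n23 e1
  have k2 : t*E₂ = -s*r₂ := mul_right_cancel₀ n13 e2
  have k3 : t*E₃ = -s*r₃ := mul_right_cancel₀ (sub_ne_zero.mpr h12) e3
  refine ⟨-s/t, ?_, ?_, ?_⟩
  · field_simp; linear_combination k1
  · field_simp; linear_combination k2
  · field_simp; linear_combination k3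

/-- v ≠ 0, distinct roots: contradiction -/
lemma caseV {r₁ r₂ r₃ E₁ E₂ E₃ P₁ P₂ P₃ Q₁ Q₂ Q₃ v : ℂ}
    (h12 : r₁ ≠ r₂) (h13 : r₁ ≠ r₃) (h23 : r₂ ≠ r₃) (hs : r₁ + r₂ + r₃ = 0)
    (hE1 : E₁ ≠ 0) (hE2 : E₂ ≠ 0) (hE3 : E₃ ≠ 0) (hprod : E₁*E₂*E₃ = 1)
    (hψ0 : P₁ + P₂ + P₃ = v) (hψ1 : r₁*P₁ + r₂*P₂ + r₃*P₃ = 0)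
    (hψL : P₁*E₁ + P₂*E₂ + P₃*E₃ = 0)
    (hψLd : r₁*(P₁*E₁) + r₂*(P₂*E₂) + r₃*(P₃*E₃) = 0)
    (hχ0 : Q₁ + Q₂ + Q₃ = v)
    (hχL : Q₁*E₁ + Q₂*E₂ + Q₃*E₃ = 0)
    (hχLdd : r₁^2*(Q₁*E₁) + r₂^2*(Q₂*E₂) + r₃^2*(Q₃*E₃) = 0)
    (hv : v ≠ 0) : False := by
  obtain ⟨t, ht1, ht2, ht3⟩ := ker2 hψL hψLd (Or.inl h12)
  have ht0 : t ≠ 0 := by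
    intro h
    rw [h, zero_mul] at ht1 ht2 ht3
    have p1 : P₁ = 0 := by
      rcases mul_eq_zero.mp ht1 with h' | h'; exact h'; exact absurd h' hE1
    have p2 : P₂ = 0 := by
      rcases mul_eq_zero.mp ht2 with h' | h'; exact h'; exact absurd h' hE2
    have p3 : P₃ = 0 := by
      rcases mul_eq_zero.mp ht3 with h' | h'; exact h'; exact absurd h' hE3
    rw [p1, p2, p3] at hψ0
    exact hv (by linear_combination -hψ0)
  have hP1 : P₁ = t*(r₂-r₃)*(E₂*E₃) := by
    have h' : P₁*(E₁*E₂*E₃) = t*(r₂-r₃)*(E₂*E₃) := by linear_combination (E₂*E₃)*ht1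
    rw [hprod, mul_one] at h'; exact h'
  have hP2 : P₂ = t*(r₃-r₁)*(E₁*E₃) := by
    have h' : P₂*(E₁*E₂*E₃) = t*(r₃-r₁)*(E₁*E₃) := by linear_combination (E₁*E₃)*ht2
    rw [hprod, mul_one] at h'; exact h'
  have hP3 : P₃ = t*(r₁-r₂)*(E₁*E₂) := by
    have h' : P₃*(E₁*E₂*E₃) = t*(r₁-r₂)*(E₁*E₂) := by linear_combination (E₁*E₂)*ht3
    rw [hprod, mul_one] at h'; exact h'
  have hF : t*(r₁*((r₂-r₃)*(E₂*E₃)) + r₂*((r₃-r₁)*(E₁*E₃)) + r₃*((r₁-r₂)*(E₁*E₂))) = 0 := by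
    rw [hP1, hP2, hP3] at hψ1; linear_combination hψ1
  have hF0 : r₁*((r₂-r₃)*(E₂*E₃)) + r₂*((r₃-r₁)*(E₁*E₃)) + r₃*((r₁-r₂)*(E₁*E₂)) = 0 :=
    (mul_eq_zero.mp hF).resolve_left ht0
  obtain ⟨s, hq1, hq2, hq3⟩ := ker2 hχL hχLdd (sq_ne h12 h13 h23)
  have hQ1 : Q₁ = s*(r₂^2-r₃^2)*(E₂*E₃) := by
    have h' : Q₁*(E₁*E₂*E₃) = s*(r₂^2-r₃^2)*(E₂*E₃) := by linear_combination (E₂*E₃)*hq1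
    rw [hprod, mul_one] at h'; exact h'
  have hQ2 : Q₂ = s*(r₃^2-r₁^2)*(E₁*E₃) := by
    have h' : Q₂*(E₁*E₂*E₃) = s*(r₃^2-r₁^2)*(E₁*E₃) := by linear_combination (E₁*E₃)*hq2
    rw [hprod, mul_one] at h'; exact h'
  have hQ3 : Q₃ = s*(r₁^2-r₂^2)*(E₁*E₂) := by
    have h' : Q₃*(E₁*E₂*E₃) = s*(r₁^2-r₂^2)*(E₁*E₂) := by linear_combination (E₁*E₂)*hq3
    rw [hprod, mul_one] at h'; exact h'
  have hvz : v = 0 := by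
    rw [hQ1, hQ2, hQ3] at hχ0
    linear_combination -hχ0 + s*(r₂-r₃)*(E₂*E₃)*hs + s*(r₃-r₁)*(E₁*E₃)*hs
      + s*(r₁-r₂)*(E₁*E₂)*hs - s*hF0
  exact hv hvz

end ForwardCore


section DoubleForward

variable {μ P R Lc : ℂ}

lemma muL_one_false {μ : ℂ} {L : ℝ} (hμ : 3*μ^2 + 1 = 0) (hμL : μ*(L:ℂ) = 1) : False := by
  apply Lsq_ne_neg3 (L := L)
  linear_combination (L:ℂ)^2*hμ - 3*(μ*(L:ℂ)+1)*hμL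

/-- v = 0, type A, double root: contradiction -/
lemma caseA0d {α β γ : ℂ} {L : ℝ} (hL : 0 < L) (hμ : 3*μ^2 + 1 = 0)
    (hP : P ≠ 0) (hR : R ≠ 0)
    (e0 : α + γ = 0) (e1 : α*μ + β - 2*μ*γ = 0)
    (eL : (α + β*(L:ℂ))*P + γ*R = 0)
    (eLd : (α*μ + β + β*μ*(L:ℂ))*P + (-2*μ)*γ*R = 0)
    (hC : ¬(α = 0 ∧ β = 0 ∧ γ = 0)) : False := by
  have hμ0 : μ ≠ 0 := by intro h; rw [h] at hμ; norm_num at hμ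
  have hLC : (L:ℂ) ≠ 0 := Complex.ofReal_ne_zero.mpr (ne_of_gt hL)
  have hα : α = -γ := by linear_combination e0
  have hβ : β = 3*μ*γ := by linear_combination e1 - μ*e0
  have hγ0 : γ ≠ 0 := by
    intro h; exact hC ⟨by rw [hα, h, neg_zero], by rw [hβ, h, mul_zero], h⟩
  have E1 : γ*((3*μ*(L:ℂ) - 1)*P + R) = 0 := by
    rw [hα, hβ] at eL; linear_combination eL
  have E2 : γ*(μ*((3*μ*(L:ℂ) + 2)*P - 2*R)) = 0 := by
    rw [hα, hβ] at eLd; linear_combination eLd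
  have E1' : (3*μ*(L:ℂ) - 1)*P + R = 0 := (mul_eq_zero.mp E1).resolve_left hγ0
  have E2' : (3*μ*(L:ℂ) + 2)*P - 2*R = 0 :=
    (mul_eq_zero.mp ((mul_eq_zero.mp E2).resolve_left hγ0)).resolve_left hμ0
  have key : (9*(μ*(L:ℂ)))*P = 0 := by linear_combination 2*E1' + E2'
  rcases mul_eq_zero.mp key with h | h
  · rcases mul_eq_zero.mp h with h' | h'
    · norm_num at h'
    · rcases mul_eq_zero.mp h' with h'' | h''
      · exact hμ0 h''
      · exact hLC h''
  · exact hP h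

/-- v = 0, type B, double root: contradiction -/
lemma caseB0d {α β γ : ℂ} {L : ℝ} (hL : 0 < L) (hμ : 3*μ^2 + 1 = 0)
    (hP : P ≠ 0) (hR : R ≠ 0)
    (e0 : α + γ = 0) (e1 : α*μ + β - 2*μ*γ = 0)
    (eL : (α + β*(L:ℂ))*P + γ*R = 0)
    (eLdd : (α*μ^2 + 2*β*μ + β*μ^2*(L:ℂ))*P + 4*μ^2*γ*R = 0)
    (hC : ¬(α = 0 ∧ β = 0 ∧ γ = 0)) : False := by
  have hμ0 : μ ≠ 0 := by intro h; rw [h] at hμ; norm_num at hμ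
  have hα : α = -γ := by linear_combination e0
  have hβ : β = 3*μ*γ := by linear_combination e1 - μ*e0
  have hγ0 : γ ≠ 0 := by
    intro h; exact hC ⟨by rw [hα, h, neg_zero], by rw [hβ, h, mul_zero], h⟩
  have E1 : γ*((3*μ*(L:ℂ) - 1)*P + R) = 0 := by
    rw [hα, hβ] at eL; linear_combination eL
  have E2 : γ*(μ^2*((3*μ*(L:ℂ) + 5)*P + 4*R)) = 0 := by
    rw [hα, hβ] at eLdd; linear_combination eLdd
  have E1' : (3*μ*(L:ℂ) - 1)*P + R = 0 := (mul_eq_zero.mp E1).resolve_left hγ0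
  have E2' : (3*μ*(L:ℂ) + 5)*P + 4*R = 0 :=
    (mul_eq_zero.mp ((mul_eq_zero.mp E2).resolve_left hγ0)).resolve_left (pow_ne_zero 2 hμ0)
  have key : (9*(μ*(L:ℂ) - 1))*P = 0 := by linear_combination 4*E1' - E2'
  rcases mul_eq_zero.mp key with h | h
  · rcases mul_eq_zero.mp h with h' | h'
    · norm_num at h'
    · exact muL_one_false hμ (by linear_combination h')
  · exact hP h

/-- v ≠ 0, double root: contradiction -/
lemma caseVd {α β γ α' β' γ' : ℂ} {L : ℝ} (hL : 0 < L) (hμ : 3*μ^2 + 1 = 0)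
    (hP : P ≠ 0) (hR : R ≠ 0)
    (e1ψ : α*μ + β - 2*μ*γ = 0)
    (eLψ : (α + β*(L:ℂ))*P + γ*R = 0)
    (eLdψ : (α*μ + β + β*μ*(L:ℂ))*P + (-2*μ)*γ*R = 0)
    (hvψ : α + γ ≠ 0)
    (e1χ : α'*μ + β' - 2*μ*γ' = 0)
    (eLχ : (α' + β'*(L:ℂ))*P + γ'*R = 0)
    (eLddχ : (α'*μ^2 + 2*β'*μ + β'*μ^2*(L:ℂ))*P + 4*μ^2*γ'*R = 0)
    (hvχ : α' + γ' ≠ 0) : False := by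
  have hμ0 : μ ≠ 0 := by intro h; rw [h] at hμ; norm_num at hμ
  -- ψ side
  have hβP : β*P = 3*μ*(γ*R) := by linear_combination eLdψ - μ*eLψ
  have hp0 : α + β*(L:ℂ) ≠ 0 := by
    intro hp
    have hγR : γ*R = 0 := by linear_combination eLψ - P*hp
    have hγ : γ = 0 := (mul_eq_zero.mp hγR).resolve_right hR
    have hβ : β = 0 := by
      have : β*P = 0 := by rw [hβP, hγ]; ring
      exact (mul_eq_zero.mp this).resolve_right hP
    have hα : α = 0 := by rw [hβ] at hp; linear_combination hp
    exact hvψ (by rw [hα, hγ, add_zero])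
  have hβ2 : β = -3*μ*(α + β*(L:ℂ)) := by
    have h' : β*P = (-3*μ*(α + β*(L:ℂ)))*P := by linear_combination hβP + 3*μ*eLψ
    exact mul_right_cancel₀ hP h'
  have hkey1 : (3*μ*(L:ℂ) - 2)*(α + β*(L:ℂ)) = 2*γ := by
    apply mul_left_cancel₀ hμ0
    linear_combination e1ψ + (μ*(L:ℂ) - 1)*hβ2
  have hg1 : (3*μ*(L:ℂ) - 2)*R + 2*P = 0 := by
    have h' : (α + β*(L:ℂ))*((3*μ*(L:ℂ) - 2)*R + 2*P) = 0 := by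
      linear_combination R*hkey1 + 2*eLψ
    exact (mul_eq_zero.mp h').resolve_left hp0
  -- χ side
  have h2 : γ'*R = -(α' + β'*(L:ℂ))*P := by linear_combination eLχ
  have h1 : 2*β'*μ*P + 3*μ^2*(γ'*R) = 0 := by linear_combination eLddχ - μ^2*eLχ
  have hb2 : 2*β' = 3*μ*(α' + β'*(L:ℂ)) := by
    have h3 : (μ*P)*(2*β' - 3*μ*(α' + β'*(L:ℂ))) = 0 := by
      linear_combination h1 - 3*μ^2*h2
    have := (mul_eq_zero.mp h3).resolve_left (mul_ne_zero hμ0 hP)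
    linear_combination this
  have hq0 : α' + β'*(L:ℂ) ≠ 0 := by
    intro hq
    have hγR : γ'*R = 0 := by rw [h2, hq]; ring
    have hγ : γ' = 0 := (mul_eq_zero.mp hγR).resolve_right hR
    have hβ : β' = 0 := by
      have h4 : (2:ℂ)*β' = 0 := by rw [hb2, hq]; ring
      have := mul_eq_zero.mp h4
      rcases this with h | h
      · norm_num at h
      · exact h
    have hα : α' = 0 := by rw [hβ] at hq; linear_combination hq
    exact hvχ (by rw [hα, hγ, add_zero])
  have hkey2 : (5 - 3*μ*(L:ℂ))*(α' + β'*(L:ℂ)) = 4*γ' := by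
    apply mul_left_cancel₀ hμ0
    linear_combination 2*e1χ + (μ*(L:ℂ) - 1)*hb2
  have hg2 : (5 - 3*μ*(L:ℂ))*R + 4*P = 0 := by
    have h' : (α' + β'*(L:ℂ))*((5 - 3*μ*(L:ℂ))*R + 4*P) = 0 := by
      linear_combination R*hkey2 + 4*h2
    exact (mul_eq_zero.mp h').resolve_left hq0
  have key : (9*(μ*(L:ℂ) - 1))*R = 0 := by linear_combination 2*hg1 - hg2
  rcases mul_eq_zero.mp key with h | h
  · rcases mul_eq_zero.mp h with h' | h'
    · norm_num at h'
    · exact muL_one_false hμ (by linear_combination h')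
  · exact hR h

end DoubleForward


section Backward

lemma cmul_derivs {ψ : ℝ → ℂ} (h : ContDiff ℝ 3 ψ) (c : ℂ) :
    deriv (fun x => c * ψ x) = (fun x => c * deriv ψ x) ∧
    iteratedDeriv 2 (fun x => c * ψ x) = (fun x => c * iteratedDeriv 2 ψ x) ∧
    iteratedDeriv 3 (fun x => c * ψ x) = (fun x => c * iteratedDeriv 3 ψ x) := by
  obtain ⟨d1, d2, d3⟩ := cd_facts h
  have hit2 : ∀ u : ℝ → ℂ, iteratedDeriv 2 u = deriv (deriv u) := by
    intro u; rw [show (2:ℕ) = 1 + 1 from rfl, iteratedDeriv_succ, iteratedDeriv_one]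
  have hit3 : ∀ u : ℝ → ℂ, iteratedDeriv 3 u = deriv (deriv (deriv u)) := by
    intro u; rw [show (3:ℕ) = 2 + 1 from rfl, iteratedDeriv_succ, hit2]
  have h1 : deriv (fun x => c * ψ x) = fun x => c * deriv ψ x :=
    funext fun x => deriv_const_mul c (d1 x)
  have h2 : deriv (fun x => c * deriv ψ x) = fun x => c * deriv (deriv ψ) x :=
    funext fun x => deriv_const_mul c (d2 x)
  have h3 : deriv (fun x => c * deriv (deriv ψ) x) = fun x => c * deriv (deriv (deriv ψ)) x :=
    funext fun x => deriv_const_mul c (d3 x)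
  refine ⟨h1, ?_, ?_⟩
  · rw [hit2, hit2, h1, h2]
  · rw [hit3, hit3, h1, h2, h3]

lemma kdv_cmul {lam : ℂ} {L : ℝ} {ψ : ℝ → ℂ} (h : KdVSpectralODE lam L ψ) (c : ℂ) :
    KdVSpectralODE lam L (fun x => c * ψ x) := by
  obtain ⟨hd, h2, h3⟩ := cmul_derivs h.1 c
  refine ⟨contDiff_const.mul h.1, fun x hx => ?_⟩
  rw [hd, h3]
  have := h.2 x hx
  linear_combination c * this

lemma gSol_nontrivial {r₁ r₂ r₃ C₁ C₂ C₃ : ℂ}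
    (h12 : r₁ ≠ r₂) (h13 : r₁ ≠ r₃) (h23 : r₂ ≠ r₃) {L : ℝ} (hL : 0 < L)
    (hC : ¬(C₁ = 0 ∧ C₂ = 0 ∧ C₃ = 0)) :
    ∃ x ∈ Icc (0:ℝ) L, gSol 1 C₁ 0 r₁ C₂ 0 r₂ C₃ 0 r₃ x ≠ 0 := by
  by_contra hcon
  push_neg at hcon
  set g := gSol 1 C₁ 0 r₁ C₂ 0 r₂ C₃ 0 r₃ with hgdef
  have heq : EqOn g (fun _ => (0:ℂ)) (Icc 0 L) := fun x hx => hcon x hx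
  have hgd : deriv g = gSol 1 (C₁*r₁+0) (0*r₁) r₁ (C₂*r₂+0) (0*r₂) r₂ (C₃*r₃+0) (0*r₃) r₃ :=
    gSol_deriv 1 C₁ 0 r₁ C₂ 0 r₂ C₃ 0 r₃
  have hzd : deriv (fun _ : ℝ => (0:ℂ)) = fun _ => (0:ℂ) := by
    funext x; exact deriv_const x 0
  have hd1 : EqOn (deriv g) (fun _ => (0:ℂ)) (Icc 0 L) := by
    have := derivEqOnIcc hL (gSol_differentiable _ _ _ _ _ _ _ _ _ _)
      (differentiable_const 0) heq
    rwa [hzd] at this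
  have hd2 : EqOn (deriv (deriv g)) (fun _ => (0:ℂ)) (Icc 0 L) := by
    have := derivEqOnIcc hL (by rw [hgd]; exact gSol_differentiable _ _ _ _ _ _ _ _ _ _)
      (differentiable_const 0) hd1
    rwa [hzd] at this
  have hmem0 : (0:ℝ) ∈ Icc (0:ℝ) L := ⟨le_rfl, hL.le⟩
  have e0 : C₁ + C₂ + C₃ = 0 := by
    have := heq hmem0
    rw [hgdef, gSol_eval] at this
    simpa using this
  have e1 : r₁*C₁ + r₂*C₂ + r₃*C₃ = 0 := by
    have := hd1 hmem0
    rw [hgd, gSol_eval] at this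
    simp only [Complex.ofReal_zero, mul_zero, zero_mul, add_zero, Complex.exp_zero,
      mul_one, one_mul] at this
    linear_combination this
  have e2 : r₁^2*C₁ + r₂^2*C₂ + r₃^2*C₃ = 0 := by
    have := hd2 hmem0
    have hgdd : deriv (deriv g)
        = gSol 1 ((C₁*r₁+0)*r₁+0*r₁) ((0*r₁)*r₁) r₁ ((C₂*r₂+0)*r₂+0*r₂) ((0*r₂)*r₂) r₂
          ((C₃*r₃+0)*r₃+0*r₃) ((0*r₃)*r₃) r₃ := by
      rw [hgd]; exact gSol_deriv _ _ _ _ _ _ _ _ _ _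
    rw [hgdd, gSol_eval] at this
    simp only [Complex.ofReal_zero, mul_zero, zero_mul, add_zero, Complex.exp_zero,
      mul_one, one_mul] at this
    linear_combination this
  obtain ⟨z1, z2, z3⟩ := vand3 h12 h13 h23 e0 (by linear_combination e1) (by linear_combination e2)
  exact hC ⟨z1, z2, z3⟩

/-- backward construction for `L ∈ criticalN` -/
lemma constructN {L : ℝ} (hL : 0 < L) (hmem : L ∈ criticalN) :
    ∃ lam : ℂ, ∃ ψ : ℝ → ℂ, KdVSpectralODE lam L ψ ∧ ψ 0 = 0 ∧ deriv ψ 0 = 0 ∧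
      ψ L = 0 ∧ deriv ψ L = 0 ∧ ∃ x ∈ Icc (0:ℝ) L, ψ x ≠ 0 := by
  obtain ⟨k, l, hk, hl, hLeq⟩ := hmem
  have hQpos : (0:ℝ) < (k:ℝ)^2 + (k:ℝ)*l + (l:ℝ)^2 := by positivity
  have hL2 : L^2 = 4*Real.pi^2/3*((k:ℝ)^2 + (k:ℝ)*l + (l:ℝ)^2) := by
    rw [hLeq, mul_pow, div_pow, mul_pow, Real.sq_sqrt hQpos.le,
      Real.sq_sqrt (by norm_num : (0:ℝ) ≤ 3)]
    ring
  set u := 2*Real.pi/L with hu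
  have hLne : L ≠ 0 := ne_of_gt hL
  have hupos : 0 < u := by rw [hu]; positivity
  set t₁ : ℝ := u*(2*k+l)/3 with ht₁
  set t₂ : ℝ := u*((l:ℝ)-k)/3 with ht₂
  set t₃ : ℝ := -(u*((k:ℝ)+2*l)/3) with ht₃
  have t12 : t₁ - t₂ = u*k := by rw [ht₁, ht₂]; ring
  have t23 : t₂ - t₃ = u*l := by rw [ht₂, ht₃]; ring
  have ht12 : t₂ < t₁ := by nlinarith [mul_pos hupos (show (0:ℝ) < k by exact_mod_cast hk)]
  have ht23 : t₃ < t₂ := by nlinarith [mul_pos hupos (show (0:ℝ) < l by exact_mod_cast hl)]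
  set r₁ : ℂ := Complex.I * t₁ with hr₁
  set r₂ : ℂ := Complex.I * t₂ with hr₂
  set r₃ : ℂ := Complex.I * t₃ with hr₃
  have rne : ∀ s s' : ℝ, s ≠ s' → Complex.I * s ≠ Complex.I * s' := by
    intro s s' hss h
    exact hss (Complex.ofReal_inj.mp (mul_left_cancel₀ Complex.I_ne_zero h))
  have h12 : r₁ ≠ r₂ := rne _ _ (ne_of_gt ht12)
  have h23 : r₂ ≠ r₃ := rne _ _ (ne_of_gt ht23)
  have h13 : r₁ ≠ r₃ := rne _ _ (ne_of_gt (lt_trans ht23 ht12))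
  have hsum : r₁ + r₂ + r₃ = 0 := by
    rw [hr₁, hr₂, hr₃, ht₁, ht₂, ht₃]; push_cast; ring
  have tsym : t₁*t₂ + t₁*t₃ + t₂*t₃ = -1 := by
    rw [ht₁, ht₂, ht₃, hu]
    field_simp
    nlinarith [hL2]
  have hsym : r₁*r₂ + r₁*r₃ + r₂*r₃ = 1 := by
    rw [hr₁, hr₂, hr₃]
    have tsym' : (t₁:ℂ)*t₂ + (t₁:ℂ)*t₃ + (t₂:ℂ)*t₃ = -1 := by exact_mod_cast tsym
    linear_combination ((t₁:ℂ)*t₂ + (t₁:ℂ)*t₃ + (t₂:ℂ)*t₃)*Complex.I_sq - tsym'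
  set lam := -(r₁*r₂*r₃) with hlam
  obtain ⟨hc1, hc2, hc3⟩ := cubic_of_sym (lam := lam) hsum hsym (by rw [hlam, neg_neg])
  have targ12 : (t₁ - t₂)*L = 2*Real.pi*k := by rw [t12, hu]; field_simp
  have targ23 : (t₂ - t₃)*L = 2*Real.pi*l := by rw [t23, hu]; field_simp
  have hE12 : Complex.exp (r₁*L) = Complex.exp (r₂*L) := by
    apply Complex.exp_eq_exp_iff_exists_int.mpr
    refine ⟨(k:ℤ), ?_⟩
    rw [hr₁, hr₂]
    have : ((t₁ - t₂)*L : ℝ) = (2*Real.pi*k : ℝ) := targ12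
    push_cast
    have hC : ((t₁:ℂ) - t₂)*(L:ℂ) = 2*(Real.pi:ℂ)*k := by exact_mod_cast this
    linear_combination Complex.I * hC
  have hE23 : Complex.exp (r₂*L) = Complex.exp (r₃*L) := by
    apply Complex.exp_eq_exp_iff_exists_int.mpr
    refine ⟨(l:ℤ), ?_⟩
    rw [hr₂, hr₃]
    have : ((t₂ - t₃)*L : ℝ) = (2*Real.pi*l : ℝ) := targ23
    push_cast
    have hC : ((t₂:ℂ) - (t₃:ℂ))*(L:ℂ) = 2*(Real.pi:ℂ)*l := by exact_mod_cast this
    linear_combination Complex.I * hC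
  refine ⟨lam, gSol 1 (r₂-r₃) 0 r₁ (r₃-r₁) 0 r₂ (r₁-r₂) 0 r₃, ?_, ?_, ?_, ?_, ?_, ?_⟩
  · exact gSol_kdv L 1 _ 0 r₁ _ 0 r₂ _ 0 r₃ hc1 hc2 hc3 (Or.inl rfl) (Or.inl rfl) (Or.inl rfl)
  · rw [gSol_eval]; simp
  · rw [gSol_deriv, gSol_eval]
    simp only [Complex.ofReal_zero, mul_zero, zero_mul, add_zero, Complex.exp_zero,
      mul_one, one_mul]
    ring
  · rw [gSol_eval, hE12, hE23]; ring
  · rw [gSol_deriv, gSol_eval, hE12, hE23]; ring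
  · apply gSol_nontrivial h12 h13 h23 hL
    rintro ⟨hz, -, -⟩
    exact h23 (sub_eq_zero.mp hz)

end Backward


section BackwardStar

lemma star_key {z : ℂ} {L : ℝ} (hL : 0 < L) (hsq : (L:ℂ)^2 = -3*z^2)
    (he : Complex.exp (3*z) = -2) : False := by
  have h2' : z^2 = ((-(L^2)/3 : ℝ) : ℂ) := by push_cast; linear_combination hsq/3
  have him : 2*(z.re*z.im) = 0 := by
    have : (z^2).im = 0 := by rw [h2', Complex.ofReal_im]
    rw [sq, Complex.mul_im] at this
    linarith
  have hre2 : z.re^2 - z.im^2 = -(L^2)/3 := by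
    have : (z^2).re = -(L^2)/3 := by rw [h2', Complex.ofReal_re]
    rw [sq, Complex.mul_re] at this
    nlinarith
  have hre : z.re = 0 := by
    rcases mul_eq_zero.mp him with h | h
    · norm_num at h
    · rcases mul_eq_zero.mp h with h' | h'
      · exact h'
      · exfalso; rw [h'] at hre2; nlinarith [sq_nonneg z.re, sq_nonneg L, hL]
  have habs := congrArg (‖·‖) he
  rw [Complex.norm_exp] at habs
  have : (3*z).re = 0 := by simp [Complex.mul_re, hre]
  rw [this, Real.exp_zero] at habs
  rw [show ((-2:ℂ)) = ((-2:ℝ):ℂ) by norm_num, Complex.norm_real] at habs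
  norm_num at habs

/-- backward construction for `L ∈ criticalNStar` -/
lemma constructStar {L : ℝ} (hL : 0 < L) (hmem : L ∈ criticalNStar) :
    ∃ lam : ℂ, ∃ χ : ℝ → ℂ, KdVSpectralODE lam L χ ∧ χ 0 = 0 ∧ deriv χ 0 = 0 ∧
      χ L = 0 ∧ iteratedDeriv 2 χ L = 0 ∧ ∃ x ∈ Icc (0:ℝ) L, χ x ≠ 0 := by
  obtain ⟨-, a, b, hab, hbc, hsq⟩ := hmem
  have hLne : (L:ℂ) ≠ 0 := Complex.ofReal_ne_zero.mpr (ne_of_gt hL)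
  -- nonvanishing
  have hLsq : (L:ℂ)^2 ≠ 0 := pow_ne_zero 2 hLne
  have ha0 : a ≠ 0 := by
    intro h
    rw [h] at hab hsq
    have hb0 : b = 0 := by
      have := hab.symm
      rw [zero_mul] at this
      exact (mul_eq_zero.mp this).resolve_right (Complex.exp_ne_zero b)
    rw [hb0] at hsq
    apply hLsq; rw [hsq]; ring
  have hb0 : b ≠ 0 := by
    intro h
    rw [h] at hab hsq
    have : a = 0 := by
      rw [zero_mul] at hab
      exact (mul_eq_zero.mp hab).resolve_right (Complex.exp_ne_zero a)
    rw [this] at hsq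
    apply hLsq; rw [hsq]; ring
  have hc0 : -(a+b) ≠ 0 := by
    intro h
    have hb' : b = 0 := by
      have := hbc
      rw [h, zero_mul] at this
      exact (mul_eq_zero.mp this).resolve_right (Complex.exp_ne_zero b)
    exact hb0 hb'
  -- distinctness
  have hexp3 : ∀ z : ℂ, Complex.exp z = Complex.exp (3*z) * Complex.exp (-(2*z)) := by
    intro z; rw [← Complex.exp_add]; congr 1; ring
  have hne_ab : a ≠ b := by
    intro h
    subst h
    -- hbc : a e^a = -(2a) e^{-(2a)}
    have hbc' : a * (Complex.exp (3*a) * Complex.exp (-(2*a)))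
        = -(2*a) * Complex.exp (-(2*a)) := by
      rw [← hexp3]
      convert hbc using 2 <;> ring_nf
    have h1' : (a * Complex.exp (3*a)) * Complex.exp (-(2*a))
        = (-(2*a)) * Complex.exp (-(2*a)) := by linear_combination hbc'
    have h1 : a * Complex.exp (3*a) = -(2*a) :=
      mul_right_cancel₀ (Complex.exp_ne_zero _) h1'
    have he : Complex.exp (3*a) = -2 :=
      mul_left_cancel₀ ha0 (by linear_combination h1)
    exact star_key hL (by linear_combination hsq) he
  have hne_bc : b ≠ -(a+b) := by
    intro h
    -- a = -2b
    have haval : a = -(2*b) := by linear_combination h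
    subst haval
    -- hab : -(2b) e^{-(2b)} = b e^b
    have hab' : -(2*b) * Complex.exp (-(2*b))
        = b * (Complex.exp (3*b) * Complex.exp (-(2*b))) := by
      rw [← hexp3]; exact hab
    have h1' : (-(2*b)) * Complex.exp (-(2*b))
        = (b * Complex.exp (3*b)) * Complex.exp (-(2*b)) := by linear_combination hab'
    have h1 : -(2*b) = b * Complex.exp (3*b) :=
      mul_right_cancel₀ (Complex.exp_ne_zero _) h1'
    have he : Complex.exp (3*b) = -2 :=
      mul_left_cancel₀ hb0 (by linear_combination -h1)
    exact star_key hL (by linear_combination hsq) he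
  have hne_ac : a ≠ -(a+b) := by
    intro h
    have hbval : b = -(2*a) := by linear_combination h
    subst hbval
    -- hab : a e^a = -(2a) e^{-(2a)}
    have hab' : a * (Complex.exp (3*a) * Complex.exp (-(2*a)))
        = -(2*a) * Complex.exp (-(2*a)) := by
      rw [← hexp3]; exact hab
    have h1' : (a * Complex.exp (3*a)) * Complex.exp (-(2*a))
        = (-(2*a)) * Complex.exp (-(2*a)) := by linear_combination hab'
    have h1 : a * Complex.exp (3*a) = -(2*a) :=
      mul_right_cancel₀ (Complex.exp_ne_zero _) h1'
    have he : Complex.exp (3*a) = -2 :=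
      mul_left_cancel₀ ha0 (by linear_combination h1)
    exact star_key hL (by linear_combination hsq) he
  -- roots
  set r₁ : ℂ := -a/L with hr₁
  set r₂ : ℂ := -b/L with hr₂
  set r₃ : ℂ := (a+b)/L with hr₃
  have h12 : r₁ ≠ r₂ := by
    intro h
    apply hne_ab
    have := congrArg (fun z => z * (-(L:ℂ))) h
    simp only [hr₁, hr₂] at this
    field_simp at this
    exact this
  have h13 : r₁ ≠ r₃ := by
    intro h
    apply hne_ac
    have := h
    rw [hr₁, hr₃, div_eq_div_iff hLne hLne] at this
    have h2 := mul_right_cancel₀ hLne this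
    linear_combination -h2
  have h23 : r₂ ≠ r₃ := by
    intro h
    apply hne_bc
    have := h
    rw [hr₂, hr₃, div_eq_div_iff hLne hLne] at this
    have h2 := mul_right_cancel₀ hLne this
    linear_combination -h2
  have hsum : r₁ + r₂ + r₃ = 0 := by rw [hr₁, hr₂, hr₃]; field_simp; ring
  have hsym : r₁*r₂ + r₁*r₃ + r₂*r₃ = 1 := by
    have hrw : r₁*r₂ + r₁*r₃ + r₂*r₃ = (-(a^2+a*b+b^2))/((L:ℂ)^2) := by
      rw [hr₁, hr₂, hr₃]
      rw [div_mul_div_comm, div_mul_div_comm, div_mul_div_comm, ← add_div,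
        ← add_div]
      rw [show -a*-b + -a*(a+b) + -b*(a+b) = -(a^2+a*b+b^2) by ring,
        show (L:ℂ)*(L:ℂ) = (L:ℂ)^2 by ring]
    rw [hrw, ← hsq]
    exact div_self hLsq
  set lam := -(r₁*r₂*r₃) with hlam
  obtain ⟨hc1, hc2, hc3⟩ := cubic_of_sym (lam := lam) hsum hsym (by rw [hlam, neg_neg])
  -- exponential values
  have harg1 : r₁*(L:ℂ) = -a := by rw [hr₁]; field_simp
  have harg2 : r₂*(L:ℂ) = -b := by rw [hr₂]; field_simp
  have harg3 : r₃*(L:ℂ) = a+b := by rw [hr₃]; field_simp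
  have hw0 : a * Complex.exp a ≠ 0 := mul_ne_zero ha0 (Complex.exp_ne_zero a)
  have hea : Complex.exp (-a) * (a * Complex.exp a) = a := by
    rw [Complex.exp_neg]
    field_simp
  have heb : Complex.exp (-b) * (a * Complex.exp a) = b := by
    rw [hab, Complex.exp_neg]
    field_simp
  have hec : Complex.exp (a+b) * (a * Complex.exp a) = -(a+b) := by
    rw [hab, hbc, Complex.exp_neg]
    rw [show Complex.exp (a+b) = (Complex.exp (-(a+b)))⁻¹ by
      rw [← Complex.exp_neg]; congr 1; ring]
    field_simp
  refine ⟨lam, gSol 1 (r₂-r₃) 0 r₁ (r₃-r₁) 0 r₂ (r₁-r₂) 0 r₃, ?_, ?_, ?_, ?_, ?_, ?_⟩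
  · exact gSol_kdv L 1 _ 0 r₁ _ 0 r₂ _ 0 r₃ hc1 hc2 hc3 (Or.inl rfl) (Or.inl rfl) (Or.inl rfl)
  · rw [gSol_eval]; simp
  · rw [gSol_deriv, gSol_eval]
    simp only [Complex.ofReal_zero, mul_zero, zero_mul, add_zero, Complex.exp_zero,
      mul_one, one_mul]
    ring
  · -- χ L = 0
    rw [gSol_eval, harg1, harg2, harg3]
    have key : ((r₂-r₃) * Complex.exp (-a) + (r₃-r₁) * Complex.exp (-b)
        + (r₁-r₂) * Complex.exp (a+b)) * (a * Complex.exp a) = 0 := by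
      have expand : ((r₂-r₃) * Complex.exp (-a) + (r₃-r₁) * Complex.exp (-b)
          + (r₁-r₂) * Complex.exp (a+b)) * (a * Complex.exp a)
          = (r₂-r₃) * (Complex.exp (-a) * (a * Complex.exp a)) + (r₃-r₁) * (Complex.exp (-b) * (a * Complex.exp a))
            + (r₁-r₂) * (Complex.exp (a+b) * (a * Complex.exp a)) := by ring
      rw [expand, hea, heb, hec, hr₁, hr₂, hr₃]
      field_simp
      ring
    have := (mul_eq_zero.mp key).resolve_right hw0
    linear_combination this
  · -- χ'' L = 0
    rw [gSol_iteratedDeriv2, gSol_eval, harg1, harg2, harg3]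
    have key : ((r₂-r₃)*r₁^2 * Complex.exp (-a) + (r₃-r₁)*r₂^2 * Complex.exp (-b)
        + (r₁-r₂)*r₃^2 * Complex.exp (a+b)) * (a * Complex.exp a) = 0 := by
      have expand : ((r₂-r₃)*r₁^2 * Complex.exp (-a) + (r₃-r₁)*r₂^2 * Complex.exp (-b)
          + (r₁-r₂)*r₃^2 * Complex.exp (a+b)) * (a * Complex.exp a)
          = (r₂-r₃)*r₁^2 * (Complex.exp (-a) * (a * Complex.exp a)) + (r₃-r₁)*r₂^2 * (Complex.exp (-b) * (a * Complex.exp a))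
            + (r₁-r₂)*r₃^2 * (Complex.exp (a+b) * (a * Complex.exp a)) := by ring
      rw [expand, hea, heb, hec, hr₁, hr₂, hr₃]
      field_simp
      ring
    have := (mul_eq_zero.mp key).resolve_right hw0
    linear_combination this
  · apply gSol_nontrivial h12 h13 h23 hL
    rintro ⟨hz, -, -⟩
    exact h23 (sub_eq_zero.mp hz)

end BackwardStar


lemma build_family (N m : ℕ) (hN : 3 < N) {lam : ℂ} {L : ℝ} (hL : 0 < L)
    (ψ : ℝ → ℂ) (hk : KdVSpectralODE lam L ψ) (h0 : ψ 0 = 0) (hd0 : deriv ψ 0 = 0)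
    (hLv : ψ L = 0) (hnt : ∃ x ∈ Icc (0:ℝ) L, ψ x ≠ 0)
    (j₀ j₁ : Fin N) (hj : j₀ ≠ j₁)
    (hA : ∀ j : Fin N, (j:ℕ) < m → (j = j₀ ∨ j = j₁) → deriv ψ L = 0)
    (hB : ∀ j : Fin N, m ≤ (j:ℕ) → (j = j₀ ∨ j = j₁) → iteratedDeriv 2 ψ L = 0) :
    (∃ lam : ℂ, ∃ φ : Fin N → ℝ → ℂ,
      (∀ j, KdVSpectralODE lam L (φ j)) ∧
      (∀ j, φ j 0 = φ ⟨0, by omega⟩ 0) ∧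
      (∑ j, iteratedDeriv 2 (φ j) 0) = 0 ∧
      (∀ j, φ j L = 0) ∧
      (∀ j, deriv (φ j) 0 = 0) ∧
      (∀ j : Fin N, (j : ℕ) < m → deriv (φ j) L = 0) ∧
      (∀ j : Fin N, m ≤ (j : ℕ) → iteratedDeriv 2 (φ j) L = 0) ∧
      (∃ j, ∃ x ∈ Set.Icc (0 : ℝ) L, φ j x ≠ 0)) := by
  classical
  set c : Fin N → ℂ := fun j => (if j = j₀ then 1 else 0) - (if j = j₁ then 1 else 0) with hc
  refine ⟨lam, fun j => fun x => c j * ψ x, fun j => kdv_cmul hk (c j),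
    ?_, ?_, ?_, ?_, ?_, ?_, ?_⟩
  · intro j
    show c j * ψ 0 = _ * ψ 0
    rw [h0, mul_zero, mul_zero]
  · have hrw : ∀ j : Fin N, iteratedDeriv 2 (fun x => c j * ψ x) 0
        = c j * iteratedDeriv 2 ψ 0 := fun j => by rw [(cmul_derivs hk.1 (c j)).2.1]
    calc (∑ j, iteratedDeriv 2 (fun x => c j * ψ x) 0)
        = ∑ j, c j * iteratedDeriv 2 ψ 0 := Finset.sum_congr rfl (fun j _ => hrw j)
      _ = (∑ j, c j) * iteratedDeriv 2 ψ 0 := (Finset.sum_mul _ _ _).symm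
      _ = 0 := by
          have hsum : (∑ j, c j) = 0 := by
            rw [hc]
            rw [Finset.sum_sub_distrib,
              Finset.sum_ite_eq' Finset.univ j₀ (fun _ => (1:ℂ)),
              Finset.sum_ite_eq' Finset.univ j₁ (fun _ => (1:ℂ))]
            simp
          rw [hsum, zero_mul]
  · intro j
    show c j * ψ L = 0
    rw [hLv, mul_zero]
  · intro j
    rw [(cmul_derivs hk.1 (c j)).1]
    show c j * deriv ψ 0 = 0
    rw [hd0, mul_zero]
  · intro j hjm
    rw [(cmul_derivs hk.1 (c j)).1]
    show c j * deriv ψ L = 0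
    by_cases hcase : j = j₀ ∨ j = j₁
    · rw [hA j hjm hcase, mul_zero]
    · push_neg at hcase
      have : c j = 0 := by rw [hc]; simp [hcase.1, hcase.2]
      rw [this, zero_mul]
  · intro j hjm
    rw [(cmul_derivs hk.1 (c j)).2.1]
    show c j * iteratedDeriv 2 ψ L = 0
    by_cases hcase : j = j₀ ∨ j = j₁
    · rw [hB j hjm hcase, mul_zero]
    · push_neg at hcase
      have : c j = 0 := by rw [hc]; simp [hcase.1, hcase.2]
      rw [this, zero_mul]
  · obtain ⟨x, hx, hne⟩ := hnt
    refine ⟨j₀, x, hx, ?_⟩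
    show c j₀ * ψ x ≠ 0
    have : c j₀ = 1 := by rw [hc]; simp [hj]
    rw [this, one_mul]
    exact hne

theorem stmt7 (N m : ℕ) (hN : 3 < N) (hm1 : 1 < m) (hm2 : m < N - 1)
    (L : ℝ) (hL : 0 < L) :
    (∃ lam : ℂ, ∃ φ : Fin N → ℝ → ℂ,
      (∀ j, KdVSpectralODE lam L (φ j)) ∧
      (∀ j, φ j 0 = φ ⟨0, by omega⟩ 0) ∧
      (∑ j, iteratedDeriv 2 (φ j) 0) = 0 ∧
      (∀ j, φ j L = 0) ∧
      (∀ j, deriv (φ j) 0 = 0) ∧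
      (∀ j : Fin N, (j : ℕ) < m → deriv (φ j) L = 0) ∧
      (∀ j : Fin N, m ≤ (j : ℕ) → iteratedDeriv 2 (φ j) L = 0) ∧
      (∃ j, ∃ x ∈ Set.Icc (0 : ℝ) L, φ j x ≠ 0)) ↔
    L ∈ criticalN ∪ criticalNStar := by
  constructor
  · rintro ⟨lam, φ, hkdv, hbc0, -, hbcL, hd0, hdA, hdB, jstar, x, hx, hne⟩
    have h0m : (0:ℝ) ∈ Icc (0:ℝ) L := ⟨le_rfl, hL.le⟩
    have hLm : L ∈ Icc (0:ℝ) L := ⟨hL.le, le_rfl⟩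
    obtain ⟨r₁, r₂, r₃, hs, hp, hq⟩ := roots_exist lam
    obtain ⟨hc1, hc2, hc3⟩ := cubic_of_sym hs hp hq
    have idx0 : Fin N := ⟨0, by omega⟩
    by_cases hdist : r₁ ≠ r₂ ∧ r₁ ≠ r₃ ∧ r₂ ≠ r₃
    · -- distinct roots
      obtain ⟨h12, h13, h23⟩ := hdist
      have hprod : Complex.exp (r₁*(L:ℂ)) * Complex.exp (r₂*(L:ℂ))
          * Complex.exp (r₃*(L:ℂ)) = 1 := by
        rw [← Complex.exp_add, ← Complex.exp_add,
          show r₁*(L:ℂ) + r₂*(L:ℂ) + r₃*(L:ℂ) = 0 by linear_combination (L:ℂ)*hs,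
          Complex.exp_zero]
      by_cases hv0 : φ (⟨0, by omega⟩ : Fin N) 0 = 0
      · -- all values at 0 vanish
        obtain ⟨C₁, C₂, C₃, hrep⟩ := rep_distinct hc1 hc2 hc3 h12 h13 h23 (hkdv jstar) hL
        have h2 : φ jstar 0 = 0 := (hbc0 jstar).trans hv0
        have S0 : C₁ + C₂ + C₃ = 0 := by
          have h1 := (hrep 0 h0m).1
          rw [h2] at h1
          simpa using h1.symm
        have S1 : C₁*r₁ + C₂*r₂ + C₃*r₃ = 0 := by
          have h1 := (hrep 0 h0m).2.1
          rw [hd0 jstar] at h1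
          simpa using h1.symm
        have SL : C₁*Complex.exp (r₁*(L:ℂ)) + C₂*Complex.exp (r₂*(L:ℂ))
            + C₃*Complex.exp (r₃*(L:ℂ)) = 0 := by
          have h1 := (hrep L hLm).1
          rw [hbcL jstar] at h1
          exact h1.symm
        have hC : ¬(C₁ = 0 ∧ C₂ = 0 ∧ C₃ = 0) := by
          rintro ⟨z1, z2, z3⟩
          apply hne
          rw [(hrep x hx).1, z1, z2, z3]
          ring
        rcases lt_or_ge (jstar : ℕ) m with hjm | hjm
        · have SLd : C₁*r₁*Complex.exp (r₁*(L:ℂ)) + C₂*r₂*Complex.exp (r₂*(L:ℂ))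
              + C₃*r₃*Complex.exp (r₃*(L:ℂ)) = 0 := by
            have h1 := (hrep L hLm).2.1
            rw [hdA jstar hjm] at h1
            exact h1.symm
          obtain ⟨e12, e23⟩ := caseA0 h12 h13 h23 S0 (by linear_combination S1)
            SL (by linear_combination SLd) hC
          exact Or.inl (rosier_arith hL hs hp h12 h13 h23 e12 e23)
        · have SLdd : C₁*r₁^2*Complex.exp (r₁*(L:ℂ)) + C₂*r₂^2*Complex.exp (r₂*(L:ℂ))
              + C₃*r₃^2*Complex.exp (r₃*(L:ℂ)) = 0 := by
            have h1 := (hrep L hLm).2.2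
            rw [hdB jstar hjm] at h1
            exact h1.symm
          obtain ⟨w, hw1, hw2, hw3⟩ := caseB0 h12 h13 h23 hs S0 (by linear_combination S1)
            SL (by linear_combination SLdd) hC
          exact Or.inr (gg_arith hL hs hp hw1 hw2 hw3)
      · -- common value nonzero : contradiction
        exfalso
        have hidx0m : ((⟨0, by omega⟩ : Fin N) : ℕ) < m := by simp; omega
        have hidxNm : m ≤ ((⟨N-1, by omega⟩ : Fin N) : ℕ) := by simp; omega
        obtain ⟨P₁, P₂, P₃, hrepP⟩ :=
          rep_distinct hc1 hc2 hc3 h12 h13 h23 (hkdv ⟨0, by omega⟩) hL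
        obtain ⟨Q₁, Q₂, Q₃, hrepQ⟩ :=
          rep_distinct hc1 hc2 hc3 h12 h13 h23 (hkdv ⟨N-1, by omega⟩) hL
        have hψ0 : P₁ + P₂ + P₃ = φ (⟨0, by omega⟩ : Fin N) 0 := by
          have h1 := (hrepP 0 h0m).1
          simpa using h1.symm
        have hψ1' : r₁*P₁ + r₂*P₂ + r₃*P₃ = 0 := by
          have h1 := (hrepP 0 h0m).2.1
          rw [hd0 _] at h1
          have h1' := h1.symm
          simp only [Complex.ofReal_zero, mul_zero, Complex.exp_zero, mul_one] at h1'
          linear_combination h1'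
        have hψL : P₁*Complex.exp (r₁*(L:ℂ)) + P₂*Complex.exp (r₂*(L:ℂ))
            + P₃*Complex.exp (r₃*(L:ℂ)) = 0 := by
          have h1 := (hrepP L hLm).1
          rw [hbcL _] at h1
          exact h1.symm
        have hψLd : r₁*(P₁*Complex.exp (r₁*(L:ℂ))) + r₂*(P₂*Complex.exp (r₂*(L:ℂ)))
            + r₃*(P₃*Complex.exp (r₃*(L:ℂ))) = 0 := by
          have h1 := (hrepP L hLm).2.1
          rw [hdA _ hidx0m] at h1
          linear_combination h1.symm
        have hχ0 : Q₁ + Q₂ + Q₃ = φ (⟨0, by omega⟩ : Fin N) 0 := by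
          have h1 := (hrepQ 0 h0m).1
          have h2 : φ (⟨N-1, by omega⟩ : Fin N) 0 = φ (⟨0, by omega⟩ : Fin N) 0 := hbc0 _
          rw [h2] at h1
          simpa using h1.symm
        have hχL : Q₁*Complex.exp (r₁*(L:ℂ)) + Q₂*Complex.exp (r₂*(L:ℂ))
            + Q₃*Complex.exp (r₃*(L:ℂ)) = 0 := by
          have h1 := (hrepQ L hLm).1
          rw [hbcL _] at h1
          exact h1.symm
        have hχLdd : r₁^2*(Q₁*Complex.exp (r₁*(L:ℂ))) + r₂^2*(Q₂*Complex.exp (r₂*(L:ℂ)))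
            + r₃^2*(Q₃*Complex.exp (r₃*(L:ℂ))) = 0 := by
          have h1 := (hrepQ L hLm).2.2
          rw [hdB _ hidxNm] at h1
          linear_combination h1.symm
        exact caseV h12 h13 h23 hs (Complex.exp_ne_zero _) (Complex.exp_ne_zero _)
          (Complex.exp_ne_zero _) hprod hψ0 hψ1' hψL hψLd hχ0 hχL hχLdd hv0
    · -- double root : contradiction
      exfalso
      obtain ⟨μ, hμ, hlam⟩ := double_root_struct hs hp hq hdist
      by_cases hv0 : φ (⟨0, by omega⟩ : Fin N) 0 = 0
      · obtain ⟨α, β, γ, hrep⟩ := rep_double hμ hlam hL (hkdv jstar)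
        have h2 : φ jstar 0 = 0 := (hbc0 jstar).trans hv0
        have e0 : α + γ = 0 := by
          have h1 := (hrep 0 h0m).1
          rw [h2] at h1
          simpa using h1.symm
        have e1 : α*μ + β - 2*μ*γ = 0 := by
          have h1 := (hrep 0 h0m).2.1
          rw [hd0 jstar] at h1
          have h1' := h1.symm
          simp only [Complex.ofReal_zero, mul_zero, add_zero, Complex.exp_zero,
            mul_one] at h1'
          linear_combination h1'
        have eL : (α + β*(L:ℂ))*Complex.exp (μ*(L:ℂ))
            + γ*Complex.exp ((-2*μ)*(L:ℂ)) = 0 := by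
          have h1 := (hrep L hLm).1
          rw [hbcL jstar] at h1
          exact h1.symm
        have hC : ¬(α = 0 ∧ β = 0 ∧ γ = 0) := by
          rintro ⟨z1, z2, z3⟩
          apply hne
          rw [(hrep x hx).1, z1, z2, z3]
          ring
        rcases lt_or_ge (jstar : ℕ) m with hjm | hjm
        · have eLd : (α*μ + β + β*μ*(L:ℂ))*Complex.exp (μ*(L:ℂ))
              + (-2*μ)*γ*Complex.exp ((-2*μ)*(L:ℂ)) = 0 := by
            have h1 := (hrep L hLm).2.1
            rw [hdA jstar hjm] at h1
            exact h1.symm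
          exact caseA0d hL hμ (Complex.exp_ne_zero _) (Complex.exp_ne_zero _)
            e0 e1 eL eLd hC
        · have eLdd : (α*μ^2 + 2*β*μ + β*μ^2*(L:ℂ))*Complex.exp (μ*(L:ℂ))
              + 4*μ^2*γ*Complex.exp ((-2*μ)*(L:ℂ)) = 0 := by
            have h1 := (hrep L hLm).2.2
            rw [hdB jstar hjm] at h1
            exact h1.symm
          exact caseB0d hL hμ (Complex.exp_ne_zero _) (Complex.exp_ne_zero _)
            e0 e1 eL eLdd hC
      · have hidx0m : ((⟨0, by omega⟩ : Fin N) : ℕ) < m := by simp; omega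
        have hidxNm : m ≤ ((⟨N-1, by omega⟩ : Fin N) : ℕ) := by simp; omega
        obtain ⟨α, β, γ, hrepP⟩ := rep_double hμ hlam hL (hkdv ⟨0, by omega⟩)
        obtain ⟨α', β', γ', hrepQ⟩ := rep_double hμ hlam hL (hkdv ⟨N-1, by omega⟩)
        have e1ψ : α*μ + β - 2*μ*γ = 0 := by
          have h1 := (hrepP 0 h0m).2.1
          rw [hd0 _] at h1
          have h1' := h1.symm
          simp only [Complex.ofReal_zero, mul_zero, add_zero, Complex.exp_zero,
            mul_one] at h1'
          linear_combination h1'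
        have eLψ : (α + β*(L:ℂ))*Complex.exp (μ*(L:ℂ))
            + γ*Complex.exp ((-2*μ)*(L:ℂ)) = 0 := by
          have h1 := (hrepP L hLm).1
          rw [hbcL _] at h1
          exact h1.symm
        have eLdψ : (α*μ + β + β*μ*(L:ℂ))*Complex.exp (μ*(L:ℂ))
            + (-2*μ)*γ*Complex.exp ((-2*μ)*(L:ℂ)) = 0 := by
          have h1 := (hrepP L hLm).2.1
          rw [hdA _ hidx0m] at h1
          exact h1.symm
        have hvψ : α + γ ≠ 0 := by
          have h1 := (hrepP 0 h0m).1
          intro hz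
          apply hv0
          rw [h1]
          simpa using hz
        have e1χ : α'*μ + β' - 2*μ*γ' = 0 := by
          have h1 := (hrepQ 0 h0m).2.1
          rw [hd0 _] at h1
          have h1' := h1.symm
          simp only [Complex.ofReal_zero, mul_zero, add_zero, Complex.exp_zero,
            mul_one] at h1'
          linear_combination h1'
        have eLχ : (α' + β'*(L:ℂ))*Complex.exp (μ*(L:ℂ))
            + γ'*Complex.exp ((-2*μ)*(L:ℂ)) = 0 := by
          have h1 := (hrepQ L hLm).1
          rw [hbcL _] at h1
          exact h1.symm
        have eLddχ : (α'*μ^2 + 2*β'*μ + β'*μ^2*(L:ℂ))*Complex.exp (μ*(L:ℂ))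
            + 4*μ^2*γ'*Complex.exp ((-2*μ)*(L:ℂ)) = 0 := by
          have h1 := (hrepQ L hLm).2.2
          rw [hdB _ hidxNm] at h1
          exact h1.symm
        have hvχ : α' + γ' ≠ 0 := by
          have h1 := (hrepQ 0 h0m).1
          intro hz
          apply hv0
          rw [← hbc0 (⟨N-1, by omega⟩ : Fin N), h1]
          simpa using hz
        exact caseVd hL hμ (Complex.exp_ne_zero _) (Complex.exp_ne_zero _)
          e1ψ eLψ eLdψ hvψ e1χ eLχ eLddχ hvχ
  · rintro (hmem | hmem)
    · obtain ⟨lam, ψ, hk, h0, hd0, hLv, hdL, hnt⟩ := constructN hL hmem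
      exact build_family N m hN hL ψ hk h0 hd0 hLv hnt ⟨0, by omega⟩ ⟨1, by omega⟩
        (by simp [Fin.ext_iff])
        (fun j _ _ => hdL)
        (fun j hjm hcase => by
          rcases hcase with rfl | rfl <;> simp at hjm <;> omega)
    · obtain ⟨lam, χ, hk, h0, hd0, hLv, hdd, hnt⟩ := constructStar hL hmem
      exact build_family N m hN hL χ hk h0 hd0 hLv hnt ⟨m, by omega⟩ ⟨m+1, by omega⟩
        (by simp [Fin.ext_iff])
        (fun j hjm hcase => by
          rcases hcase with rfl | rfl <;> simp at hjm <;> omega)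
        (fun j _ _ => hdd)

end
end
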